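/- arXiv:1201.2467 — 12 statements merged into one kernel-verified Lean document; each statement's English description precedes it below -/
import Mathlib

section
/- In the 2×2 symmetric game with payoff matrix U = [[-1,0],[0,-1]], the strategy p = (1/2,1/2) is an ESS, but p is not robust against the two simultaneous mutations r¹ = (1/4,3/4) and r² = (3/4,1/4): for every ε ∈ (0,1/2), u(p, εr¹ + εr² + (1-2ε)p) = u(r¹, εr¹ + εr² + (1-2ε)p). -/
open Finset Set

noncomputable section

/-- The probability simplex in ℝᵏ. -/
def Δ' (k : ℕ) : Set (Fin k → ℝ) := stdSimplex ℝ (Fin k)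

/-- Affine payoff determined by the matrix `U`. -/
def payoff {k : ℕ} (U : Fin k → Fin k → ℝ) (p q : Fin k → ℝ) : ℝ :=
  ∑ i, ∑ j, p i * q j * U i j

/-- The pure strategy `eⁱ`. -/
def pure' {k : ℕ} (i : Fin k) : Fin k → ℝ := fun j => if j = i then 1 else 0

/-- Population state when mutations `r i` appear in proportions `ε i` against incumbent `p`. -/
def mix {k m : ℕ} (p : Fin k → ℝ) (r : Fin m → Fin k → ℝ) (ε : Fin m → ℝ) : Fin k → ℝ :=
  fun j => (∑ i, ε i * r i j) + (1 - ∑ i, ε i) * p j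

/-- Evolutionarily stable strategy (ESS). -/
def IsESS {k : ℕ} (U : Fin k → Fin k → ℝ) (p : Fin k → ℝ) : Prop :=
  p ∈ Δ' k ∧ ∀ r ∈ Δ' k, r ≠ p → ∃ e ∈ Set.Ioo (0:ℝ) 1, ∀ ε : ℝ, 0 < ε → ε ≤ e →
    payoff U p (fun j => ε * r j + (1 - ε) * p j) >
      payoff U r (fun j => ε * r j + (1 - ε) * p j)

/-- Evolutionary stability against `m` mutations. -/
def StableAgainst {k : ℕ} (U : Fin k → Fin k → ℝ) (m : ℕ) (p : Fin k → ℝ) : Prop :=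
  ∀ r : Fin m → Fin k → ℝ, (∀ i, r i ∈ Δ' k) → (∀ i, r i ≠ p) →
    ∃ e ∈ Set.Ioo (0:ℝ) 1, ∀ ε : Fin m → ℝ, (∀ i, ε i ∈ Set.Ioc (0:ℝ) e) →
      ∀ i, payoff U p (mix p r ε) > payoff U (r i) (mix p r ε)

/-- `e` is a uniform invasion barrier for `p` against `m` mutations. -/
def UniformBarrier {k : ℕ} (U : Fin k → Fin k → ℝ) (m : ℕ) (p : Fin k → ℝ) (e : ℝ) : Prop :=
  ∀ r : Fin m → Fin k → ℝ, (∀ i, r i ∈ Δ' k) → (∀ i, r i ≠ p) →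
    ∀ ε : Fin m → ℝ, (∀ i, ε i ∈ Set.Ioc (0:ℝ) e) →
      ∀ i, payoff U p (mix p r ε) > payoff U (r i) (mix p r ε)

/-- Best responses to `p`. -/
def BR {k : ℕ} (U : Fin k → Fin k → ℝ) (p : Fin k → ℝ) : Set (Fin k → ℝ) :=
  {q ∈ Δ' k | ∀ r ∈ Δ' k, payoff U r p ≤ payoff U q p}

/-- Local dominance. -/
def LocallyDominant {k : ℕ} (U : Fin k → Fin k → ℝ) (p : Fin k → ℝ) : Prop :=
  ∃ V ∈ nhdsWithin p (Δ' k), V ⊆ Δ' k ∧ ∀ s ∈ V, s ≠ p → ∀ r ∈ V, r ≠ p →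
    payoff U p r ≥ payoff U s r ∧ payoff U p r > payoff U r r

/-- Strict local dominance. -/
def StrictlyLocallyDominant {k : ℕ} (U : Fin k → Fin k → ℝ) (p : Fin k → ℝ) : Prop :=
  ∃ V ∈ nhdsWithin p (Δ' k), V ⊆ Δ' k ∧ ∀ s ∈ V, s ≠ p → ∀ r ∈ V, r ≠ p →
    payoff U p r > payoff U s r

theorem stmt_0 :
    let U : Fin 2 → Fin 2 → ℝ := ![![-1, 0], ![0, -1]]
    let p : Fin 2 → ℝ := ![1/2, 1/2]
    let r1 : Fin 2 → ℝ := ![1/4, 3/4]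
    let r2 : Fin 2 → ℝ := ![3/4, 1/4]
    IsESS U p ∧
      ∀ ε : ℝ, 0 < ε → ε < 1/2 →
        payoff U p (fun j => ε * r1 j + ε * r2 j + (1 - 2*ε) * p j) =
          payoff U r1 (fun j => ε * r1 j + ε * r2 j + (1 - 2*ε) * p j) := by

  intro U p r1 r2
  constructor
  · constructor
    · constructor
      · intro i; fin_cases i <;> norm_num [p]
      · norm_num [Fin.sum_univ_two, p]
    · intro r hr hne
      refine ⟨1/2, by norm_num, ?_⟩
      intro ε hε hεe
      obtain ⟨hpos, hsum⟩ := hr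
      rw [Fin.sum_univ_two] at hsum
      have hr0 : r 0 ≠ 1/2 := by
        intro h
        apply hne
        funext i
        fin_cases i <;> simp [p] <;> linarith
      have hne0 : r 0 - 1/2 ≠ 0 := sub_ne_zero.mpr hr0
      have hsq : 0 < (r 0 - 1/2)^2 := by positivity
      simp only [payoff, Fin.sum_univ_two, U, p]
      norm_num [Matrix.cons_val_zero, Matrix.cons_val_one, Matrix.head_cons]
      have h1 : r 1 = 1 - r 0 := by linarith
      rw [h1]
      nlinarith [mul_pos hε hsq]
  · intro ε hε hε2
    simp only [payoff, Fin.sum_univ_two, U, p, r1, r2]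
    norm_num [Matrix.cons_val_zero, Matrix.cons_val_one, Matrix.head_cons]
    ring
end
end

section
/- If a strategy p is evolutionarily stable against two mutations with a uniform invasion barrier ε̄, then for every m > 2, p is evolutionarily stable against m mutations with uniform invasion barrier ε̄/m. -/
open Finset Set

noncomputable section

theorem stmt_1 {k : ℕ} (U : Fin k → Fin k → ℝ) (p : Fin k → ℝ) (hp : p ∈ Δ' k)
    (e : ℝ) (he : e ∈ Set.Ioo (0:ℝ) 1) (h2 : UniformBarrier U 2 p e) :
    ∀ m : ℕ, 2 < m → UniformBarrier U m p (e / m) := by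
  intro m hm r hr hrp ε hε i
  have hm1 : (1:ℝ) ≤ m := by exact_mod_cast (by omega : 1 ≤ m)
  have heMle : e / m ≤ e := div_le_self he.1.le hm1
  set σ := ∑ j, ε j with hσ
  have hτ : σ - ε i = ∑ j ∈ Finset.univ.erase i, ε j := by
    rw [hσ, ← Finset.sum_erase_add _ _ (Finset.mem_univ i)]; ring
  haveI : Nontrivial (Fin m) := Fin.nontrivial_iff_two_le.mpr (by omega)
  obtain ⟨j₀, hj₀⟩ := exists_ne i
  have hτpos : 0 < σ - ε i := by
    rw [hτ]
    exact Finset.sum_pos (fun j _ => (hε j).1)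
      ⟨j₀, Finset.mem_erase.mpr ⟨hj₀, Finset.mem_univ _⟩⟩
  have hσle : σ ≤ e := by
    calc σ ≤ ∑ _j : Fin m, e / m := Finset.sum_le_sum fun j _ => (hε j).2
      _ = e := by
          rw [Finset.sum_const, Finset.card_univ, Fintype.card_fin, nsmul_eq_mul]
          field_simp
  have hεiIoc : ε i ∈ Set.Ioc (0:ℝ) e := ⟨(hε i).1, le_trans (hε i).2 heMle⟩
  set s : Fin k → ℝ := fun x => (∑ j ∈ Finset.univ.erase i, ε j * r j x) / (σ - ε i)
    with hs
  have hsum : ∀ x, (σ - ε i) * s x = ∑ j ∈ Finset.univ.erase i, ε j * r j x := by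
    intro x; rw [hs]; field_simp
  by_cases hsp : s = p
  · have key := h2 ![r i, r i] (by intro j; fin_cases j <;> exact hr i)
      (by intro j; fin_cases j <;> exact hrp i)
      ![ε i / 2, ε i / 2] (by
        intro j
        have hx : ε i / 2 ∈ Set.Ioc (0:ℝ) e :=
          ⟨by linarith [hεiIoc.1], by linarith [hεiIoc.2, hεiIoc.1]⟩
        fin_cases j <;> simpa using hx) 0
    have hmixeq : mix p ![r i, r i] ![ε i / 2, ε i / 2] = mix p r ε := by
      funext x
      have h1 : ∑ j, ε j * r j x = ε i * r i x + (σ - ε i) * p x := by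
        rw [← Finset.sum_erase_add _ _ (Finset.mem_univ i), ← hsum x, hsp]; ring
      simp only [mix, Fin.sum_univ_two, Matrix.cons_val_zero, Matrix.cons_val_one,
        Matrix.head_cons, h1]
      ring
    rw [hmixeq] at key
    simpa using key
  · have hsΔ : s ∈ Δ' k := by
      refine ⟨fun x => div_nonneg
        (Finset.sum_nonneg fun j _ => mul_nonneg (hε j).1.le ((hr j).1 x)) hτpos.le, ?_⟩
      rw [hs]
      simp only
      rw [← Finset.sum_div, Finset.sum_comm]
      have : ∀ j ∈ Finset.univ.erase i, (∑ x, ε j * r j x) = ε j := by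
        intro j _
        rw [← Finset.mul_sum, (hr j).2, mul_one]
      rw [Finset.sum_congr rfl this, ← hτ, div_self (ne_of_gt hτpos)]
    have key := h2 ![r i, s] (by
        intro j; fin_cases j
        · exact hr i
        · exact hsΔ)
      (by intro j; fin_cases j
          · exact hrp i
          · exact hsp)
      ![ε i, σ - ε i] (by
        intro j
        have hx : σ - ε i ∈ Set.Ioc (0:ℝ) e :=
          ⟨hτpos, by linarith [(hε i).1]⟩
        fin_cases j
        · simpa using hεiIoc
        · simpa using hx) 0
    have hmixeq : mix p ![r i, s] ![ε i, σ - ε i] = mix p r ε := by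
      funext x
      have h1 : ∑ j, ε j * r j x = ε i * r i x + (σ - ε i) * s x := by
        rw [← Finset.sum_erase_add _ _ (Finset.mem_univ i), hsum x]; ring
      simp only [mix, Fin.sum_univ_two, Matrix.cons_val_zero, Matrix.cons_val_one,
        Matrix.head_cons, h1]
      ring
    rw [hmixeq] at key
    simpa using key
end
end

section
/- If p is evolutionarily stable against two mutations, then p is a symmetric Nash equilibrium, and for every q ∈ BR(p)\{p} and every r ∈ Δ one has u(p,q) > u(q,q) and u(p,r) ≥ u(q,r). -/
open Finset Set

noncomputable section

lemma payoff_lin3 {k : ℕ} (U : Fin k → Fin k → ℝ) (a b c d : Fin k → ℝ) (s t u : ℝ) :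
    payoff U a (fun j => s * b j + t * c j + u * d j) =
      s * payoff U a b + t * payoff U a c + u * payoff U a d := by
  unfold payoff
  rw [Finset.mul_sum, Finset.mul_sum, Finset.mul_sum, ← Finset.sum_add_distrib,
    ← Finset.sum_add_distrib]
  refine Finset.sum_congr rfl fun i _ => ?_
  rw [Finset.mul_sum, Finset.mul_sum, Finset.mul_sum, ← Finset.sum_add_distrib,
    ← Finset.sum_add_distrib]
  refine Finset.sum_congr rfl fun j _ => ?_
  ring

lemma mix_eq2 {k : ℕ} (p q r : Fin k → ℝ) (e1 e2 : ℝ) :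
    mix p ![q, r] ![e1, e2] = fun j => e1 * q j + e2 * r j + (1 - (e1 + e2)) * p j := by
  funext j
  simp [mix, Fin.sum_univ_two]

lemma key_lemma {k : ℕ} (U : Fin k → Fin k → ℝ) (p q r : Fin k → ℝ)
    (h : StableAgainst U 2 p) (hq : q ∈ Δ' k) (hr : r ∈ Δ' k) (hq' : q ≠ p) (hr' : r ≠ p) :
    ∃ e : ℝ, 0 < e ∧ ∀ e1 e2 : ℝ, 0 < e1 → e1 ≤ e → 0 < e2 → e2 ≤ e →
      e1 * payoff U q q + e2 * payoff U q r + (1 - (e1 + e2)) * payoff U q p <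
      e1 * payoff U p q + e2 * payoff U p r + (1 - (e1 + e2)) * payoff U p p := by
  obtain ⟨e, ⟨he0, _⟩, hE⟩ := h ![q, r]
    (by intro i; fin_cases i <;> assumption) (by intro i; fin_cases i <;> assumption)
  refine ⟨e, he0, fun e1 e2 h1 h2 h3 h4 => ?_⟩
  have := hE ![e1, e2]
    (by intro i; fin_cases i <;> exact ⟨by assumption, by assumption⟩) 0
  rw [mix_eq2, payoff_lin3, payoff_lin3] at this
  simpa using this

lemma nonneg_aux (C K e : ℝ) (he : 0 < e)
    (h : ∀ ε : ℝ, 0 < ε → ε ≤ e → 0 < C + ε * K) : 0 ≤ C := by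
  by_contra hC
  push_neg at hC
  rcases le_or_gt K 0 with hK | hK
  · have := h e he le_rfl
    nlinarith
  · have hε : 0 < min e (-C / (2 * K)) := lt_min he (div_pos (by linarith) (by linarith))
    have h1 := h _ hε (min_le_left _ _)
    have h2 : min e (-C / (2 * K)) ≤ -C / (2 * K) := min_le_right _ _
    have h3 : min e (-C / (2 * K)) * K ≤ (-C / (2 * K)) * K :=
      mul_le_mul_of_nonneg_right h2 hK.le
    have h4 : (-C / (2 * K)) * K = -C / 2 := by field_simp
    nlinarith

theorem stmt_2 {k : ℕ} (U : Fin k → Fin k → ℝ) (p : Fin k → ℝ) (hp : p ∈ Δ' k)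
    (h : StableAgainst U 2 p) :
    p ∈ BR U p ∧
      ∀ q ∈ BR U p, q ≠ p → ∀ r ∈ Δ' k,
        payoff U p q > payoff U q q ∧ payoff U p r ≥ payoff U q r := by
  have hBR : p ∈ BR U p := by
    refine ⟨hp, fun r hr => ?_⟩
    by_cases hrp : r = p
    · subst hrp; exact le_rfl
    · obtain ⟨e, he, hK⟩ := key_lemma U p r r h hr hr hrp hrp
      have hC : 0 ≤ payoff U p p - payoff U r p := by
        refine nonneg_aux _ (2 * (payoff U p r - payoff U r r) -
          2 * (payoff U p p - payoff U r p)) e he fun ε h1 h2 => ?_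
        have := hK ε ε h1 h2 h1 h2
        nlinarith
      linarith
  refine ⟨hBR, fun q hq hqp r hr => ?_⟩
  have hqeq : payoff U q p = payoff U p p :=
    le_antisymm (hBR.2 q hq.1) (hq.2 p hp)
  have hA : payoff U q q < payoff U p q := by
    obtain ⟨e, he, hK⟩ := key_lemma U p q q h hq.1 hq.1 hqp hqp
    have := hK e e he le_rfl he le_rfl
    nlinarith
  refine ⟨hA, ?_⟩
  by_cases hrp : r = p
  · subst hrp; rw [hqeq]
  · obtain ⟨e, he, hK⟩ := key_lemma U p q r h hq.1 hr hqp hrp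
    have hC : 0 ≤ e * (payoff U p r - payoff U q r) := by
      refine nonneg_aux _ (payoff U p q - payoff U q q) e he fun ε h1 h2 => ?_
      have := hK ε e h1 h2 he le_rfl
      nlinarith
    nlinarith
end
end

section
/- If p ∈ Δ is a symmetric Nash equilibrium and for every q ∈ BR(p)\{p} and every r ∈ Δ one has u(p,q) > u(q,q) and u(p,r) ≥ u(q,r), then p is evolutionarily stable against two mutations. -/
open Finset Set

noncomputable section

lemma payoff_mix2 {k : ℕ} (U : Fin k → Fin k → ℝ) (a p : Fin k → ℝ)
    (r : Fin 2 → Fin k → ℝ) (ε : Fin 2 → ℝ) :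
    payoff U a (mix p r ε) = ε 0 * payoff U a (r 0) + ε 1 * payoff U a (r 1)
      + (1 - (ε 0 + ε 1)) * payoff U a p := by
  have h : ∀ i j, a i * mix p r ε j * U i j
      = ε 0 * (a i * r 0 j * U i j) + ε 1 * (a i * r 1 j * U i j)
        + (1 - (ε 0 + ε 1)) * (a i * p j * U i j) := by
    intro i j
    simp only [mix, Fin.sum_univ_two]
    ring
  simp only [payoff, h, Finset.sum_add_distrib, ← Finset.mul_sum]

theorem stmt_3 {k : ℕ} (U : Fin k → Fin k → ℝ) (p : Fin k → ℝ) (hp : p ∈ Δ' k)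
    (hNE : p ∈ BR U p)
    (h : ∀ q ∈ BR U p, q ≠ p → ∀ r ∈ Δ' k,
        payoff U p q > payoff U q q ∧ payoff U p r ≥ payoff U q r) :
    StableAgainst U 2 p := by
  intro r hr hrp
  have hNash : ∀ s ∈ Δ' k, payoff U s p ≤ payoff U p p := hNE.2
  have key : ∀ i : Fin 2, ∃ e ∈ Set.Ioo (0:ℝ) 1, ∀ ε : Fin 2 → ℝ,
      (∀ j, ε j ∈ Set.Ioc (0:ℝ) e) →
      payoff U p (mix p r ε) > payoff U (r i) (mix p r ε) := by
    intro i
    by_cases hbr : r i ∈ BR U p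
    · refine ⟨1/4, ⟨by norm_num, by norm_num⟩, ?_⟩
      intro ε hε
      have h1 := (h (r i) hbr (hrp i) (r 0) (hr 0)).2
      have h2 := (h (r i) hbr (hrp i) (r 1) (hr 1)).2
      have h3 := (h (r i) hbr (hrp i) (r i) (hr i)).1
      have hε0 := hε 0; have hε1 := hε 1
      have hBi : 0 ≤ payoff U p p - payoff U (r i) p :=
        sub_nonneg.2 (hNash (r i) (hr i))
      have hi : i = 0 ∨ i = 1 := by omega
      rw [payoff_mix2, payoff_mix2]
      rcases hi with rfl | rfl
      · have t1 : 0 < ε 0 * (payoff U p (r 0) - payoff U (r 0) (r 0)) :=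
          mul_pos hε0.1 (by linarith)
        have t2 : 0 ≤ ε 1 * (payoff U p (r 1) - payoff U (r 0) (r 1)) :=
          mul_nonneg hε1.1.le (by linarith)
        have t3 : 0 ≤ (1 - (ε 0 + ε 1)) * (payoff U p p - payoff U (r 0) p) :=
          mul_nonneg (by linarith [hε0.2, hε1.2]) hBi
        nlinarith [t1, t2, t3]
      · have t1 : 0 < ε 1 * (payoff U p (r 1) - payoff U (r 1) (r 1)) :=
          mul_pos hε1.1 (by linarith)
        have t2 : 0 ≤ ε 0 * (payoff U p (r 0) - payoff U (r 1) (r 0)) :=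
          mul_nonneg hε0.1.le (by linarith)
        have t3 : 0 ≤ (1 - (ε 0 + ε 1)) * (payoff U p p - payoff U (r 1) p) :=
          mul_nonneg (by linarith [hε0.2, hε1.2]) hBi
        nlinarith [t1, t2, t3]
    · -- r i is not a best response
      have hBpos : 0 < payoff U p p - payoff U (r i) p := by
        simp only [BR, Set.mem_setOf_eq, not_and, not_forall] at hbr
        obtain ⟨s, hs, hlt⟩ := hbr (hr i)
        push_neg at hlt
        have := hNash s hs
        linarith
      have hC0 : (0:ℝ) ≤ |payoff U p (r 0) - payoff U (r i) (r 0)|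
          + |payoff U p (r 1) - payoff U (r i) (r 1)| := by positivity
      refine ⟨min (1/4) ((payoff U p p - payoff U (r i) p) /
          (4 * (|payoff U p (r 0) - payoff U (r i) (r 0)|
            + |payoff U p (r 1) - payoff U (r i) (r 1)| + 1))),
        ⟨lt_min (by norm_num) (by positivity),
        lt_of_le_of_lt (min_le_left _ _) (by norm_num)⟩, ?_⟩
      intro ε hε
      have hε0 := hε 0; have hε1 := hε 1
      have he4 : ε 0 ≤ 1/4 := le_trans hε0.2 (min_le_left _ _)
      have he4' : ε 1 ≤ 1/4 := le_trans hε1.2 (min_le_left _ _)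
      have hk0 : ε 0 * (4 * (|payoff U p (r 0) - payoff U (r i) (r 0)|
            + |payoff U p (r 1) - payoff U (r i) (r 1)| + 1))
          ≤ payoff U p p - payoff U (r i) p :=
        (le_div_iff₀ (by positivity)).1 (le_trans hε0.2 (min_le_right _ _))
      have hk1 : ε 1 * (4 * (|payoff U p (r 0) - payoff U (r i) (r 0)|
            + |payoff U p (r 1) - payoff U (r i) (r 1)| + 1))
          ≤ payoff U p p - payoff U (r i) p :=
        (le_div_iff₀ (by positivity)).1 (le_trans hε1.2 (min_le_right _ _))
      have p1 : ε 0 * (-|payoff U p (r 0) - payoff U (r i) (r 0)|)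
          ≤ ε 0 * (payoff U p (r 0) - payoff U (r i) (r 0)) :=
        mul_le_mul_of_nonneg_left (neg_abs_le _) hε0.1.le
      have p2 : ε 1 * (-|payoff U p (r 1) - payoff U (r i) (r 1)|)
          ≤ ε 1 * (payoff U p (r 1) - payoff U (r i) (r 1)) :=
        mul_le_mul_of_nonneg_left (neg_abs_le _) hε1.1.le
      have p3 : (1 - (ε 0 + ε 1) - 1/2) * (payoff U p p - payoff U (r i) p) ≥ 0 :=
        mul_nonneg (by linarith) hBpos.le
      have n1 : 0 ≤ ε 0 * |payoff U p (r 1) - payoff U (r i) (r 1)| :=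
        mul_nonneg hε0.1.le (abs_nonneg _)
      have n2 : 0 ≤ ε 1 * |payoff U p (r 0) - payoff U (r i) (r 0)| :=
        mul_nonneg hε1.1.le (abs_nonneg _)
      rw [payoff_mix2, payoff_mix2]
      nlinarith [hε0.1, hε1.1, p1, p2, p3, hk0, hk1, n1, n2]
  obtain ⟨e0, he0, hkey0⟩ := key 0
  obtain ⟨e1, he1, hkey1⟩ := key 1
  refine ⟨min e0 e1, ⟨lt_min he0.1 he1.1,
    lt_of_le_of_lt (min_le_left _ _) he0.2⟩, ?_⟩
  intro ε hε i
  have hε0 : ∀ j, ε j ∈ Set.Ioc (0:ℝ) e0 :=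
    fun j => ⟨(hε j).1, le_trans (hε j).2 (min_le_left _ _)⟩
  have hε1 : ∀ j, ε j ∈ Set.Ioc (0:ℝ) e1 :=
    fun j => ⟨(hε j).1, le_trans (hε j).2 (min_le_right _ _)⟩
  have hi : i = 0 ∨ i = 1 := by omega
  rcases hi with rfl | rfl
  · exact hkey0 ε hε0
  · exact hkey1 ε hε1
end
end

section
/- For any m > 2, a strategy p is evolutionarily stable against two mutations if and only if it is evolutionarily stable against m mutations. -/
open Finset Set

noncomputable section

set_option maxHeartbeats 1000000

def payoffL {k : ℕ} (U : Fin k → Fin k → ℝ) (x : Fin k → ℝ) : (Fin k → ℝ) →ₗ[ℝ] ℝ where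
  toFun q := payoff U x q
  map_add' y z := by
    simp only [payoff, Pi.add_apply]
    rw [← Finset.sum_add_distrib]
    refine Finset.sum_congr rfl fun a _ => ?_
    rw [← Finset.sum_add_distrib]
    exact Finset.sum_congr rfl fun b _ => by ring
  map_smul' c y := by
    simp only [payoff, Pi.smul_apply, smul_eq_mul, RingHom.id_apply, Finset.mul_sum]
    exact Finset.sum_congr rfl fun a _ => Finset.sum_congr rfl fun b _ => by ring

lemma payoff_mix {k m : ℕ} (U : Fin k → Fin k → ℝ) (x p : Fin k → ℝ)
    (r : Fin m → Fin k → ℝ) (ε : Fin m → ℝ) :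
    payoff U x (mix p r ε) =
      (∑ i, ε i * payoff U x (r i)) + (1 - ∑ i, ε i) * payoff U x p := by
  have hmix : mix p r ε = (∑ i, ε i • r i) + (1 - ∑ i, ε i) • p := by
    funext j; simp [mix, Finset.sum_apply]
  have : payoffL U x (mix p r ε) =
      (∑ i, ε i * payoffL U x (r i)) + (1 - ∑ i, ε i) * payoffL U x p := by
    rw [hmix, map_add, map_smul, map_sum]
    simp [smul_eq_mul]
  simpa [payoffL] using this

/-- global weak dominance characterization -/
def Cdom {k : ℕ} (U : Fin k → Fin k → ℝ) (p : Fin k → ℝ) : Prop :=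
  ∀ r ∈ Δ' k, r ≠ p →
    payoff U r p ≤ payoff U p p ∧
    (payoff U r p = payoff U p p →
      (∀ q ∈ Δ' k, payoff U r q ≤ payoff U p q) ∧ payoff U r r < payoff U p r)

lemma two_to_C {k : ℕ} (U : Fin k → Fin k → ℝ) (p : Fin k → ℝ)
    (h2 : StableAgainst U 2 p) : Cdom U p := by
  intro r hr hrp
  -- pair (r, r)
  obtain ⟨e, he, hE⟩ := h2 ![r, r] (fun i => by fin_cases i <;> simpa) (fun i => by fin_cases i <;> simpa)
  set c : ℝ := payoff U p p - payoff U r p with hc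
  set d : ℝ := payoff U p r - payoff U r r with hd
  have key1 : ∀ t : ℝ, 0 < t → t ≤ e → 0 < (t + t) * d + (1 - (t + t)) * c := by
    intro t ht hte
    have := hE (fun _ => t) (fun i => ⟨ht, hte⟩) 0
    rw [payoff_mix, payoff_mix] at this
    simp only [Fin.sum_univ_two, Matrix.cons_val_zero, Matrix.cons_val_one, Matrix.head_cons] at this
    simp only [hc, hd]
    nlinarith [this]
  have hcnn : 0 ≤ c := by
    by_contra hcn
    push_neg at hcn
    have h1 := key1 e he.1 le_rfl
    have hdc : 0 < d - c := by nlinarith [he.1]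
    set t1 := min e (-c / (4 * (d - c))) with ht1
    have ht1pos : 0 < t1 := lt_min he.1 (div_pos (by linarith) (by linarith))
    have ht1le : t1 ≤ e := min_le_left _ _
    have ht1le2 : t1 ≤ -c / (4 * (d - c)) := min_le_right _ _
    have h2' := key1 t1 ht1pos ht1le
    have h3' : t1 * (4 * (d - c)) ≤ -c := (le_div_iff₀ (by linarith)).mp ht1le2
    nlinarith [h3', ht1pos, hdc]
  -- now the conditional part
  refine ⟨by linarith, fun hceq => ?_⟩
  have hc0 : c = 0 := by simp [hc]; linarith
  have hdpos : 0 < d := by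
    have := key1 e he.1 le_rfl
    nlinarith [he.1, this]
  constructor
  · intro q hq
    by_cases hqp : q = p
    · subst hqp; linarith
    · obtain ⟨e', he', hE'⟩ := h2 ![r, q] (fun i => by fin_cases i <;> simpa)
        (fun i => by fin_cases i <;> simpa)
      set d' : ℝ := payoff U p q - payoff U r q with hd'
      have key2 : ∀ t1 t2 : ℝ, 0 < t1 → t1 ≤ e' → 0 < t2 → t2 ≤ e' →
          0 < t1 * d + t2 * d' + (1 - (t1 + t2)) * c := by
        intro t1 t2 h1 h2 h3 h4
        have := hE' ![t1, t2] (fun i => by fin_cases i <;> exact ⟨by assumption, by assumption⟩) 0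
        rw [payoff_mix, payoff_mix] at this
        simp only [Fin.sum_univ_two, Matrix.cons_val_zero, Matrix.cons_val_one,
          Matrix.head_cons] at this
        simp only [hc, hd, hd']
        nlinarith [this]
      by_contra hd'n
      push_neg at hd'n
      have hd'neg : d' < 0 := by simp only [hd']; linarith
      set t1 := min e' (-e' * d' / (2 * d)) with ht1
      have ht1pos : 0 < t1 := lt_min he'.1 (div_pos (by nlinarith [he'.1]) (by linarith))
      have h := key2 t1 e' ht1pos (min_le_left _ _) he'.1 le_rfl
      have ht1le : t1 ≤ -e' * d' / (2 * d) := min_le_right _ _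
      have h3' : t1 * (2 * d) ≤ -e' * d' := (le_div_iff₀ (by linarith)).mp ht1le
      nlinarith [h3', hc0, he'.1, hd'neg]
  · linarith

lemma C_to_n {k : ℕ} (U : Fin k → Fin k → ℝ) (p : Fin k → ℝ)
    (hC : Cdom U p) (n : ℕ) (hn : 0 < n) : StableAgainst U n p := by
  intro r hr hrp
  have key : ∀ i : Fin n, ∃ ei, ei ∈ Set.Ioo (0:ℝ) 1 ∧ ∀ ε : Fin n → ℝ,
      (∀ j, ε j ∈ Set.Ioc (0:ℝ) ei) →
      payoff U p (mix p r ε) > payoff U (r i) (mix p r ε) := by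
    intro i
    set c : ℝ := payoff U p p - payoff U (r i) p with hc
    have hCi := hC (r i) (hr i) (hrp i)
    have hcnn : 0 ≤ c := by simp only [hc]; linarith [hCi.1]
    have expand : ∀ ε : Fin n → ℝ, payoff U p (mix p r ε) - payoff U (r i) (mix p r ε)
        = (∑ j, ε j * (payoff U p (r j) - payoff U (r i) (r j))) + (1 - ∑ j, ε j) * c := by
      intro ε
      rw [payoff_mix, payoff_mix]
      have hsplit : ∑ j, ε j * (payoff U p (r j) - payoff U (r i) (r j))
          = (∑ j, ε j * payoff U p (r j)) - ∑ j, ε j * payoff U (r i) (r j) := by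
        rw [← Finset.sum_sub_distrib]
        exact Finset.sum_congr rfl fun j _ => by ring
      rw [hsplit]; simp only [hc]; ring
    rcases eq_or_lt_of_le hcnn with hc0 | hcpos
    · -- c = 0 : weak dominance case
      have hdom := hCi.2 (by simp only [hc] at hc0; linarith)
      refine ⟨1/2, by norm_num, fun ε hε => ?_⟩
      have h1 : 0 < payoff U p (mix p r ε) - payoff U (r i) (mix p r ε) := by
        rw [expand ε, ← hc0]
        have hsum : ε i * (payoff U p (r i) - payoff U (r i) (r i)) ≤
            ∑ j, ε j * (payoff U p (r j) - payoff U (r i) (r j)) :=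
          Finset.single_le_sum (f := fun j => ε j * (payoff U p (r j) - payoff U (r i) (r j)))
            (fun j _ => mul_nonneg (hε j).1.le (by linarith [hdom.1 (r j) (hr j)]))
            (Finset.mem_univ i)
        have hpos : 0 < ε i * (payoff U p (r i) - payoff U (r i) (r i)) :=
          mul_pos (hε i).1 (by linarith [hdom.2])
        linarith
      linarith
    · -- c > 0
      set D : ℝ := ∑ j, |payoff U p (r j) - payoff U (r i) (r j)| with hD
      have hDnn : 0 ≤ D := Finset.sum_nonneg fun j _ => abs_nonneg _
      set K : ℝ := n * c + D + 1 with hK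
      have hKpos : 0 < K := by positivity
      refine ⟨min (1/2) (c / K), ⟨lt_min (by norm_num) (div_pos hcpos hKpos),
        lt_of_le_of_lt (min_le_left _ _) (by norm_num)⟩, fun ε hε => ?_⟩
      set ei := min (1/2) (c / K) with hei
      have heipos : 0 < ei := lt_min (by norm_num) (div_pos hcpos hKpos)
      have heile : ei ≤ c / K := min_le_right _ _
      have heiK : ei * K ≤ c := (le_div_iff₀ hKpos).mp heile
      have hS : ∑ j, ε j ≤ n * ei := by
        calc ∑ j, ε j ≤ ∑ _j : Fin n, ei := Finset.sum_le_sum fun j _ => (hε j).2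
        _ = n * ei := by rw [Finset.sum_const, Finset.card_univ, Fintype.card_fin, nsmul_eq_mul]
      have hsum : -(ei * D) ≤ ∑ j, ε j * (payoff U p (r j) - payoff U (r i) (r j)) := by
        have : ∀ j ∈ Finset.univ, -(ei * |payoff U p (r j) - payoff U (r i) (r j)|) ≤
            ε j * (payoff U p (r j) - payoff U (r i) (r j)) := by
          intro j _
          nlinarith [abs_nonneg (payoff U p (r j) - payoff U (r i) (r j)),
            neg_abs_le (payoff U p (r j) - payoff U (r i) (r j)), (hε j).1, (hε j).2,
            le_abs_self (payoff U p (r j) - payoff U (r i) (r j))]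
        calc -(ei * D) = ∑ j, -(ei * |payoff U p (r j) - payoff U (r i) (r j)|) := by
              simp [hD, Finset.mul_sum]
        _ ≤ _ := Finset.sum_le_sum this
      have h1 : 0 < payoff U p (mix p r ε) - payoff U (r i) (mix p r ε) := by
        rw [expand ε]
        have hSc : (∑ j, ε j) * c ≤ (n * ei) * c := mul_le_mul_of_nonneg_right hS hcnn
        nlinarith [hsum, hSc, heiK, heipos, hDnn, hcpos]
      linarith
  choose ei hei using key
  have hne : Nonempty (Fin n) := ⟨⟨0, hn⟩⟩
  set e := Finset.univ.inf' Finset.univ_nonempty ei with he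
  refine ⟨e, ⟨?_, ?_⟩, fun ε hε i => ?_⟩
  · rw [he, Finset.lt_inf'_iff]
    exact fun i _ => (hei i).1.1
  · exact lt_of_le_of_lt (Finset.inf'_le _ (Finset.mem_univ ⟨0, hn⟩)) (hei ⟨0, hn⟩).1.2
  · exact (hei i).2 ε fun j => ⟨(hε j).1, le_trans (hε j).2 (Finset.inf'_le _ (Finset.mem_univ i))⟩

lemma sum_ite_fin {m : ℕ} (hm : 0 < m) (z : Fin m) (a b : ℝ) :
    ∑ i : Fin m, (if i = z then a else b) = a + ((m : ℝ) - 1) * b := by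
  rw [← Finset.add_sum_erase _ _ (Finset.mem_univ z), if_pos rfl]
  congr 1
  rw [Finset.sum_congr rfl (fun i hi => if_neg (Finset.ne_of_mem_erase hi)),
    Finset.sum_const, Finset.card_erase_of_mem (Finset.mem_univ z), Finset.card_univ,
    Fintype.card_fin, nsmul_eq_mul, Nat.cast_sub hm, Nat.cast_one]

lemma m_to_two {k : ℕ} (U : Fin k → Fin k → ℝ) (p : Fin k → ℝ) (m : ℕ) (hm : 2 < m)
    (h : StableAgainst U m p) : StableAgainst U 2 p := by
  intro r hr hrp
  have hm0 : 0 < m := by omega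
  set z : Fin m := ⟨0, hm0⟩ with hz
  set r' : Fin m → Fin k → ℝ := fun i => if i = z then r 0 else r 1 with hr'def
  obtain ⟨e, he, hE⟩ := h r' (fun i => by by_cases hi : i = z <;> simp [hr'def, hi, hr 0, hr 1])
    (fun i => by by_cases hi : i = z <;> simp [hr'def, hi, hrp 0, hrp 1])
  refine ⟨e, he, fun ε hε => ?_⟩
  have hm2 : (2:ℝ) < (m:ℝ) := by exact_mod_cast hm
  have hm1 : (0:ℝ) < (m : ℝ) - 1 := by linarith
  set ε' : Fin m → ℝ := fun i => if i = z then ε 0 else ε 1 / ((m:ℝ) - 1) with hε'def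
  have hε' : ∀ i, ε' i ∈ Set.Ioc (0:ℝ) e := by
    intro i
    by_cases hi : i = z
    · simpa [hε'def, hi] using hε 0
    · simp only [hε'def, if_neg hi]
      refine ⟨div_pos (hε 1).1 hm1, le_trans ?_ (hε 1).2⟩
      exact div_le_self (hε 1).1.le (by linarith)
  have hmixeq : mix p r' ε' = mix p r ε := by
    funext j
    simp only [mix]
    have h1 : ∑ i, ε' i * r' i j = ε 0 * r 0 j + ε 1 * r 1 j := by
      have : ∀ i : Fin m, ε' i * r' i j =
          if i = z then ε 0 * r 0 j else (ε 1 / ((m:ℝ) - 1)) * r 1 j := by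
        intro i; by_cases hi : i = z <;> simp [hε'def, hr'def, hi]
      rw [Finset.sum_congr rfl fun i _ => this i, sum_ite_fin hm0]
      field_simp
    have h2 : ∑ i, ε' i = ε 0 + ε 1 := by
      have : ∀ i : Fin m, ε' i = if i = z then ε 0 else ε 1 / ((m:ℝ) - 1) := fun i => rfl
      rw [Finset.sum_congr rfl fun i _ => this i, sum_ite_fin hm0]
      field_simp
    rw [h1, h2, Fin.sum_univ_two, Fin.sum_univ_two]
  have hE' := hE ε' hε'
  rw [hmixeq] at hE'
  intro i
  fin_cases i
  · have := hE' z
    simpa [hr'def] using this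
  · have := hE' ⟨1, by omega⟩
    have hne : (⟨1, by omega⟩ : Fin m) ≠ z := by
      simp [hz, Fin.ext_iff]
    simpa [hr'def, if_neg hne] using this


theorem stmt_4 {k : ℕ} (U : Fin k → Fin k → ℝ) (p : Fin k → ℝ) (hp : p ∈ Δ' k)
    (m : ℕ) (hm : 2 < m) :
    StableAgainst U 2 p ↔ StableAgainst U m p := by
  exact ⟨fun h2 => C_to_n U p (two_to_C U p h2) m (by omega),
    fun h => m_to_two U p m hm h⟩
end
end

section
/- A strategy p is evolutionarily stable against multiple mutations (i.e., against m mutations for every m ≥ 2) if and only if p is locally dominant. -/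
open Finset Set

noncomputable section

set_option maxHeartbeats 1000000

namespace StmtAux

variable {k : ℕ}

lemma simplex_le_one {x : Fin k → ℝ} (hx : x ∈ Δ' k) (i : Fin k) : x i ≤ 1 := by
  have h := Finset.single_le_sum (f := x) (fun j _ => hx.1 j) (Finset.mem_univ i)
  rw [hx.2] at h; exact h

/-- payoff as a linear map in the second argument. -/
def payR (U : Fin k → Fin k → ℝ) (x : Fin k → ℝ) : (Fin k → ℝ) →ₗ[ℝ] ℝ where
  toFun y := payoff U x y
  map_add' y z := by
    simp only [payoff, Pi.add_apply]
    rw [← Finset.sum_add_distrib]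
    refine Finset.sum_congr rfl fun i _ => ?_
    rw [← Finset.sum_add_distrib]
    exact Finset.sum_congr rfl fun j _ => by ring
  map_smul' c y := by
    simp only [payoff, Pi.smul_apply, smul_eq_mul, RingHom.id_apply]
    rw [Finset.mul_sum]
    refine Finset.sum_congr rfl fun i _ => ?_
    rw [Finset.mul_sum]
    exact Finset.sum_congr rfl fun j _ => by ring

/-- payoff as a linear map in the first argument. -/
def payL (U : Fin k → Fin k → ℝ) (y : Fin k → ℝ) : (Fin k → ℝ) →ₗ[ℝ] ℝ where
  toFun x := payoff U x y
  map_add' x z := by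
    simp only [payoff, Pi.add_apply]
    rw [← Finset.sum_add_distrib]
    refine Finset.sum_congr rfl fun i _ => ?_
    rw [← Finset.sum_add_distrib]
    exact Finset.sum_congr rfl fun j _ => by ring
  map_smul' c x := by
    simp only [payoff, Pi.smul_apply, smul_eq_mul, RingHom.id_apply]
    rw [Finset.mul_sum]
    refine Finset.sum_congr rfl fun i _ => ?_
    rw [Finset.mul_sum]
    exact Finset.sum_congr rfl fun j _ => by ring

lemma pay_comb (U : Fin k → Fin k → ℝ) (y w : Fin k → ℝ) {m : ℕ} (c : Fin m → ℝ)
    (q : Fin m → Fin k → ℝ) :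
    payoff U y (fun j => w j + ∑ i, c i * (q i j - w j)) =
      payoff U y w + ∑ i, c i * (payoff U y (q i) - payoff U y w) := by
  have h1 : (fun j => w j + ∑ i, c i * (q i j - w j)) = w + ∑ i, c i • (q i - w) := by
    funext j
    simp [Finset.sum_apply, smul_eq_mul]
  rw [h1]
  show payR U y (w + ∑ i, c i • (q i - w)) = _
  rw [map_add, map_sum]
  simp only [map_smul, map_sub, smul_eq_mul]
  rfl

lemma pay_line_right (U : Fin k → Fin k → ℝ) (y w q : Fin k → ℝ) (τ : ℝ) :
    payoff U y (fun j => w j + τ * (q j - w j)) =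
      payoff U y w + τ * (payoff U y q - payoff U y w) := by
  have h1 : (fun j => w j + τ * (q j - w j)) = w + τ • (q - w) := by
    funext j; simp [smul_eq_mul]
  rw [h1]
  show payR U y (w + τ • (q - w)) = _
  rw [map_add, map_smul, map_sub]
  simp only [smul_eq_mul]
  rfl

lemma pay_shift (U : Fin k → Fin k → ℝ) (y x w : Fin k → ℝ) (θ : ℝ) :
    payoff U y (fun j => x j + θ * w j) = payoff U y x + θ * payoff U y w := by
  have h1 : (fun j => x j + θ * w j) = x + θ • w := by
    funext j; simp [smul_eq_mul]
  rw [h1]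
  show payR U y (x + θ • w) = _
  rw [map_add, map_smul]; simp only [smul_eq_mul]; rfl

lemma pay_line_left (U : Fin k → Fin k → ℝ) (y w q : Fin k → ℝ) (τ : ℝ) :
    payoff U (fun j => w j + τ * (q j - w j)) y =
      payoff U w y + τ * (payoff U q y - payoff U w y) := by
  have h1 : (fun j => w j + τ * (q j - w j)) = w + τ • (q - w) := by
    funext j; simp [smul_eq_mul]
  rw [h1]
  show payL U y (w + τ • (q - w)) = _
  rw [map_add, map_smul, map_sub]
  simp only [smul_eq_mul]
  rfl

lemma payoff_pure (U : Fin k → Fin k → ℝ) (i : Fin k) (x : Fin k → ℝ) :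
    payoff U (pure' i) x = ∑ j, x j * U i j := by
  simp only [payoff, pure']
  rw [Finset.sum_eq_single i]
  · exact Finset.sum_congr rfl fun j _ => by simp
  · intro b _ hb
    apply Finset.sum_eq_zero
    intro j _
    simp [if_neg hb]
  · intro h; exact absurd (Finset.mem_univ i) h

lemma payoff_eq_sum_pure (U : Fin k → Fin k → ℝ) (s x : Fin k → ℝ) :
    payoff U s x = ∑ i, s i * payoff U (pure' i) x := by
  simp only [payoff_pure]
  rw [payoff]
  exact Finset.sum_congr rfl fun i _ => by
    rw [Finset.mul_sum]
    exact Finset.sum_congr rfl fun j _ => by ring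

lemma mix_apply {m : ℕ} (p : Fin k → ℝ) (r : Fin m → Fin k → ℝ) (ε : Fin m → ℝ) (j : Fin k) :
    mix p r ε j = p j + ∑ i, ε i * (r i j - p j) := by
  simp only [mix]
  rw [show (∑ i, ε i * (r i j - p j)) = (∑ i, ε i * r i j) - (∑ i, ε i) * p j from ?_]
  · ring
  · rw [Finset.sum_mul, ← Finset.sum_sub_distrib]
    exact Finset.sum_congr rfl fun i _ => by ring

lemma le_zero_of_lin {A B c : ℝ} (hc : 0 < c)
    (h : ∀ θ : ℝ, 0 < θ → θ ≤ c → A + θ * B ≤ 0) : A ≤ 0 := by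
  by_contra hA
  push_neg at hA
  have hB1 : (0:ℝ) < |B| + 1 := by positivity
  set θ := min c (A / (2 * (|B| + 1))) with hθdef
  have hθpos : 0 < θ := lt_min hc (by positivity)
  have h2 := h θ hθpos (min_le_left _ _)
  have hθle : θ ≤ A / (2 * (|B| + 1)) := min_le_right _ _
  have key : θ * (2 * (|B| + 1)) ≤ A := by
    rw [← le_div_iff₀ (by positivity)]; exact hθle
  have hBB : θ * -|B| ≤ θ * B := mul_le_mul_of_nonneg_left (neg_abs_le B) hθpos.le
  rw [mul_neg] at hBB
  nlinarith [h2, key, hBB, hθpos, hA]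

lemma zero_le_of_lin {A B c : ℝ} (hc : 0 < c)
    (h : ∀ θ : ℝ, 0 < θ → θ ≤ c → 0 < A + θ * B) : 0 ≤ A := by
  have := le_zero_of_lin (A := -A) (B := -B) hc (fun θ h1 h2 => by nlinarith [h θ h1 h2])
  linarith



lemma z_mem_simplex {p q : Fin k → ℝ} (hp : p ∈ Δ' k) (hq : q ∈ Δ' k) {τ : ℝ}
    (h0 : 0 ≤ τ) (h1 : τ ≤ 1) : (fun j => p j + τ * (q j - p j)) ∈ Δ' k := by
  constructor
  · intro j
    have h2 := hp.1 j; have h3 := hq.1 j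
    show 0 ≤ p j + τ * (q j - p j)
    nlinarith
  · rw [Finset.sum_add_distrib, ← Finset.mul_sum, Finset.sum_sub_distrib, hp.2, hq.2]
    ring

lemma z_ne {p q : Fin k → ℝ} (hq : q ≠ p) {τ : ℝ} (h0 : 0 < τ) :
    (fun j => p j + τ * (q j - p j)) ≠ p := by
  intro hzp
  apply hq
  funext j
  have h := congrFun hzp j
  have h : p j + τ * (q j - p j) = p j := h
  have h2 : τ * (q j - p j) = 0 := by linarith
  rcases mul_eq_zero.1 h2 with h3 | h3
  · exact absurd h3 (ne_of_gt h0)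
  · linarith

lemma z_close {p q : Fin k → ℝ} (hp : p ∈ Δ' k) (hq : q ∈ Δ' k) {τ δ₀ : ℝ}
    (h0 : 0 < τ) (h1 : τ ≤ δ₀ / 2) (hδ : 0 < δ₀) :
    (fun j => p j + τ * (q j - p j)) ∈ Metric.ball p δ₀ := by
  rw [Metric.mem_ball, dist_pi_lt_iff hδ]
  intro j
  rw [Real.dist_eq]
  have hb : |q j - p j| ≤ 1 := by
    rw [abs_le]
    have h2 := hq.1 j; have h3 := simplex_le_one hp j
    have h4 := hp.1 j; have h5 := simplex_le_one hq j
    constructor <;> linarith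
  have : |p j + τ * (q j - p j) - p j| = τ * |q j - p j| := by
    rw [show p j + τ * (q j - p j) - p j = τ * (q j - p j) by ring, abs_mul, abs_of_pos h0]
  rw [this]
  calc τ * |q j - p j| ≤ τ * 1 := by nlinarith
    _ < δ₀ := by linarith


lemma pure_mem (i : Fin k) : pure' i ∈ Δ' k := by
  constructor
  · intro j; simp only [pure']; split <;> norm_num
  · simp only [pure']
    rw [Finset.sum_ite_eq' Finset.univ i (fun _ => (1:ℝ)), if_pos (Finset.mem_univ i)]

lemma rep_sum (p t : Fin k → ℝ) (j : Fin k) :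
    ∑ i, t i * (pure' i j - p j) = t j - (∑ i, t i) * p j := by
  have h1 : ∀ i, t i * (pure' i j - p j) = (if j = i then t i else 0) - t i * p j := by
    intro i; simp only [pure']
    by_cases h : j = i
    · rw [if_pos h, if_pos h]; ring
    · rw [if_neg h, if_neg h]; ring
  rw [Finset.sum_congr rfl fun i _ => h1 i, Finset.sum_sub_distrib,
    Finset.sum_ite_eq Finset.univ j t, if_pos (Finset.mem_univ j), ← Finset.sum_mul]

lemma backward {k : ℕ} (U : Fin k → Fin k → ℝ) (p : Fin k → ℝ) (hp : p ∈ Δ' k)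
    (H : LocallyDominant U p) : ∀ m : ℕ, 2 ≤ m → StableAgainst U m p := by
  obtain ⟨V, hVmem, hVsub, hdom⟩ := H
  rw [Metric.mem_nhdsWithin_iff] at hVmem
  obtain ⟨δ₀, hδ₀, hball⟩ := hVmem
  intro m hm r hrΔ hrne
  have hFm : (Finset.univ : Finset (Fin m)).Nonempty := by
    rw [Finset.univ_nonempty_iff]
    exact Fin.pos_iff_nonempty.1 (by omega)
  set τ₀ : ℝ := min (1/2) (δ₀/2) with hτ₀def
  have hτ₀pos : 0 < τ₀ := lt_min (by norm_num) (by linarith)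
  have hτ₀le : τ₀ ≤ 1 := le_trans (min_le_left _ _) (by norm_num)
  -- points z q τ  belong to V \ {p}
  have hzV : ∀ q ∈ Δ' k, q ≠ p → ∀ τ : ℝ, 0 < τ → τ ≤ τ₀ →
      (fun j => p j + τ * (q j - p j)) ∈ V ∧ (fun j => p j + τ * (q j - p j)) ≠ p := by
    intro q hq hqne τ h0 h1
    refine ⟨hball ⟨z_close hp hq h0 (le_trans h1 (min_le_right _ _)) hδ₀,
      z_mem_simplex hp hq h0.le (le_trans h1 hτ₀le)⟩, z_ne hqne h0⟩
  set α : Fin m → ℝ := fun i => payoff U (r i) p - payoff U p p with hα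
  set C : Fin m → Fin m → ℝ := fun i j =>
    (payoff U (r i) (r j) - payoff U p (r j)) - α i with hC
  -- key linear evaluation
  have heval : ∀ (y : Fin k → ℝ) (i j : Fin m) (τ : ℝ),
      payoff U (r i) (fun l => p l + τ * (r j l - p l)) -
        payoff U p (fun l => p l + τ * (r j l - p l)) = α i + τ * C i j := by
    intro y i j τ
    rw [pay_line_right, pay_line_right]
    simp only [hα, hC]
    ring
  have key1 : ∀ (i j : Fin m) (τ : ℝ), 0 < τ → τ ≤ τ₀ → α i + τ * C i j ≤ 0 := by
    intro i j τ h0 h1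
    obtain ⟨hsV, hsne⟩ := hzV (r i) (hrΔ i) (hrne i) τ₀ hτ₀pos le_rfl
    obtain ⟨hxV, hxne⟩ := hzV (r j) (hrΔ j) (hrne j) τ h0 h1
    have hd := (hdom _ hsV hsne _ hxV hxne).1
    have hleft := pay_line_left U (fun l => p l + τ * (r j l - p l)) p (r i) τ₀
    have := heval p i j τ
    nlinarith [hd, hleft, this, hτ₀pos]
  have key2 : ∀ i, α i ≤ 0 := fun i =>
    le_zero_of_lin hτ₀pos (fun τ h0 h1 => key1 i i τ h0 h1)
  have key3 : ∀ i j, α i = 0 → C i j ≤ 0 := by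
    intro i j h0
    have := key1 i j τ₀ hτ₀pos le_rfl
    rw [h0] at this
    nlinarith
  have key4 : ∀ i, α i = 0 → C i i < 0 := by
    intro i h0
    obtain ⟨hxV, hxne⟩ := hzV (r i) (hrΔ i) (hrne i) τ₀ hτ₀pos le_rfl
    have hd := (hdom _ hxV hxne _ hxV hxne).2
    have hleft := pay_line_left U (fun l => p l + τ₀ * (r i l - p l)) p (r i) τ₀
    have heq := heval p i i τ₀
    rw [h0] at heq
    nlinarith [hd, hleft, heq, hτ₀pos, mul_pos hτ₀pos hτ₀pos]
  set M : Fin m → ℝ := fun i => ∑ j, |C i j| with hM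
  have hMnonneg : ∀ i, 0 ≤ M i := fun i => Finset.sum_nonneg fun j _ => abs_nonneg _
  set e : ℝ := Finset.univ.inf' hFm
    (fun i => if α i = 0 then 1/2 else min (1/2) (-(α i)/(M i + 1))) with he
  have hepos : 0 < e := by
    rw [he, Finset.lt_inf'_iff]
    intro i _
    by_cases h0 : α i = 0
    · rw [if_pos h0]; norm_num
    · rw [if_neg h0]
      have hlt : α i < 0 := lt_of_le_of_ne (key2 i) h0
      refine lt_min (by norm_num) (div_pos (by linarith) (by linarith [hMnonneg i]))
  have hehalf : e ≤ 1/2 := by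
    obtain ⟨i⟩ := Fin.pos_iff_nonempty.1 (show 0 < m by omega)
    refine le_trans (Finset.inf'_le _ (Finset.mem_univ i)) ?_
    by_cases h0 : α i = 0
    · rw [if_pos h0]
    · rw [if_neg h0]; exact min_le_left _ _
  refine ⟨e, ⟨hepos, by linarith⟩, ?_⟩
  intro ε hε i
  have hmixe : mix p r ε = fun j => p j + ∑ i', ε i' * (r i' j - p j) := by
    funext j; exact mix_apply p r ε j
  have hdiff : payoff U (r i) (mix p r ε) - payoff U p (mix p r ε)
      = α i + ∑ j, ε j * C i j := by
    rw [hmixe, pay_comb, pay_comb]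
    have h2 : ∑ j, ε j * C i j =
        (∑ j, ε j * (payoff U (r i) (r j) - payoff U (r i) p)) -
          ∑ j, ε j * (payoff U p (r j) - payoff U p p) := by
      rw [← Finset.sum_sub_distrib]
      exact Finset.sum_congr rfl fun j _ => by simp only [hC, hα]; ring
    rw [h2]
    simp only [hα]
    ring
  have hgoal : α i + ∑ j, ε j * C i j < 0 := by
    by_cases h0 : α i = 0
    · have hsum_le : ∑ j, ε j * C i j ≤ ∑ j, (if j = i then ε i * C i i else 0) := by
        refine Finset.sum_le_sum fun j _ => ?_
        by_cases hj : j = i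
        · rw [if_pos hj, hj]
        · rw [if_neg hj]
          exact mul_nonpos_of_nonneg_of_nonpos (hε j).1.le (key3 i j h0)
      rw [Finset.sum_ite_eq' Finset.univ i (fun j => ε i * C i i)] at hsum_le
      rw [if_pos (Finset.mem_univ i)] at hsum_le
      have : ε i * C i i < 0 := mul_neg_of_pos_of_neg (hε i).1 (key4 i h0)
      rw [h0]
      linarith
    · have hlt : α i < 0 := lt_of_le_of_ne (key2 i) h0
      have hee : e ≤ -(α i)/(M i + 1) := by
        refine le_trans (Finset.inf'_le _ (Finset.mem_univ i)) ?_
        rw [if_neg h0]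
        exact min_le_right _ _
      have hee2 : e * (M i + 1) ≤ -(α i) := by
        rw [← le_div_iff₀ (by linarith [hMnonneg i])]
        exact hee
      have hsum_le : ∑ j, ε j * C i j ≤ e * M i := by
        rw [hM, Finset.mul_sum]
        refine Finset.sum_le_sum fun j _ => ?_
        calc ε j * C i j ≤ ε j * |C i j| :=
              mul_le_mul_of_nonneg_left (le_abs_self _) (hε j).1.le
          _ ≤ e * |C i j| := mul_le_mul_of_nonneg_right (hε j).2 (abs_nonneg _)
      nlinarith [hepos]
  linarith [hdiff, hgoal]

lemma forward {k : ℕ} (U : Fin k → Fin k → ℝ) (p : Fin k → ℝ) (hp : p ∈ Δ' k)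
    (H : ∀ m : ℕ, 2 ≤ m → StableAgainst U m p) : LocallyDominant U p := by
  by_cases h0 : ∀ i : Fin k, pure' i = p
  · refine ⟨Δ' k, self_mem_nhdsWithin, Set.Subset.rfl, ?_⟩
    intro s hs hsne t ht htne
    exfalso; apply hsne
    funext j
    have h1 := rep_sum p s j
    have hz : ∑ i, s i * (pure' i j - p j) = 0 :=
      Finset.sum_eq_zero fun i _ => by rw [h0 i, sub_self, mul_zero]
    rw [hs.2] at h1
    rw [hz] at h1
    linarith
  push_neg at h0
  obtain ⟨i₀, hi₀⟩ := h0
  have hex : ∃ i, 0 < p i := by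
    by_contra h; push_neg at h
    have hsum : ∑ i, p i ≤ 0 := Finset.sum_nonpos fun i _ => h i
    rw [hp.2] at hsum; linarith
  set Pf : Finset (Fin k) := Finset.univ.filter (fun i => 0 < p i) with hPfdef
  have hPfne : Pf.Nonempty := ⟨hex.choose, by
    rw [hPfdef, Finset.mem_filter]; exact ⟨Finset.mem_univ _, hex.choose_spec⟩⟩
  set pm : ℝ := Pf.inf' hPfne p with hpmdef
  have hpm_pos : 0 < pm := by
    rw [hpmdef, Finset.lt_inf'_iff]
    intro i hi; exact (Finset.mem_filter.1 hi).2
  have hpm_le : ∀ i, 0 < p i → pm ≤ p i := fun i hi =>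
    Finset.inf'_le _ (Finset.mem_filter.2 ⟨Finset.mem_univ i, hi⟩)
  -- the family of mutants: all pure strategies other than p, padded with pure' i₀
  set r : Fin (k+2) → (Fin k → ℝ) := fun i =>
    if h : (i : ℕ) < k then
      (if pure' (⟨(i:ℕ), h⟩ : Fin k) = p then pure' i₀ else pure' (⟨(i:ℕ), h⟩ : Fin k))
    else pure' i₀ with hrdef
  have hrΔ : ∀ i, r i ∈ Δ' k := by
    intro i; simp only [hrdef]; split_ifs <;> exact pure_mem _
  have hrne : ∀ i, r i ≠ p := by
    intro i; simp only [hrdef]; split_ifs with h1 h2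
    · exact hi₀
    · exact h2
    · exact hi₀
  obtain ⟨e, ⟨hepos, helt1⟩, hE⟩ := H (k+2) (by omega) r hrΔ hrne
  set δ : ℝ := (e/2) * pm / (pm + 1) with hδdef
  have hδpos : 0 < δ := div_pos (mul_pos (by linarith) hpm_pos) (by linarith)
  -- ======== weak part ========
  have hW : ∀ x ∈ Δ' k, (∀ j, |x j - p j| ≤ δ) → ∀ s ∈ Δ' k,
      payoff U s x ≤ payoff U p x := by
    intro x hx hclose
    have hWpure : ∀ i : Fin k, payoff U (pure' i) x ≤ payoff U p x := by
      intro i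
      by_cases hpi : pure' i = p
      · rw [hpi]
      -- build the nonnegative representation coefficients
      set S : ℝ := max 0 (Pf.sup' hPfne (fun i' => -(x i' - p i') / p i')) with hSdef
      have hS0 : 0 ≤ S := le_max_left _ _
      set t : Fin k → ℝ := fun i' => (x i' - p i') + S * p i' with htdef
      have ht0 : ∀ i', 0 ≤ t i' := by
        intro i'
        by_cases hpos : 0 < p i'
        · have h1 : -(x i' - p i') / p i' ≤ S := by
            refine le_trans (Finset.le_sup' (fun i'' => -(x i'' - p i'') / p i'')
              (Finset.mem_filter.2 ⟨Finset.mem_univ i', hpos⟩)) (le_max_right _ _)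
          rw [div_le_iff₀ hpos] at h1
          simp only [htdef]; nlinarith
        · have hz : p i' = 0 := le_antisymm (not_lt.1 hpos) (hp.1 i')
          simp only [htdef, hz, mul_zero, add_zero]
          have := hx.1 i'; linarith
      have htsum : ∑ i', t i' = S := by
        simp only [htdef]
        rw [Finset.sum_add_distrib, Finset.sum_sub_distrib, hx.2, hp.2, ← Finset.mul_sum, hp.2]
        ring
      have hSle : S * pm ≤ δ := by
        have h1 : S ≤ δ / pm := by
          rw [hSdef]
          refine max_le (by positivity) (Finset.sup'_le _ _ fun i' hi' => ?_)
          have hpi' : 0 < p i' := (Finset.mem_filter.1 hi').2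
          rw [div_le_div_iff₀ hpi' hpm_pos]
          have h2 : -(x i' - p i') ≤ δ := by
            have := hclose i'; rw [abs_le] at this; linarith [this.1]
          nlinarith [hpm_le i' hpi', hpm_pos, hδpos, hpi']
        rw [← le_div_iff₀ hpm_pos]; exact h1
      have hte : ∀ i', t i' ≤ e/2 := by
        intro i'
        have h1 : S * p i' ≤ S := mul_le_of_le_one_right hS0 (simplex_le_one hp i')
        have h2 : x i' - p i' ≤ δ := by
          have := hclose i'; rw [abs_le] at this; exact this.2
        have hkey : δ * (pm + 1) = (e/2) * pm := by
          rw [hδdef]; field_simp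
        have hSd : S ≤ e/2 - δ := by
          have h3 : δ / pm ≤ e/2 - δ := by rw [div_le_iff₀ hpm_pos]; nlinarith [hkey]
          have h4 : S ≤ δ / pm := by rw [← le_div_iff₀ hpm_pos] at hSle; exact hSle
          linarith
        simp only [htdef]; linarith
      have htp : ∀ i', pure' i' = p → t i' = 0 := by
        intro i' hpi'
        have hp1 : p i' = 1 := by rw [← hpi']; simp [pure']
        have hPfsub : ∀ j ∈ Pf, j = i' := by
          intro j hj
          have hpj : 0 < p j := (Finset.mem_filter.1 hj).2
          by_contra hne
          have hz : p j = 0 := by rw [← hpi']; simp [pure', if_neg hne]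
          linarith
        have hsup : Pf.sup' hPfne (fun j => -(x j - p j) / p j) = -(x i' - p i') / p i' := by
          apply le_antisymm
          · exact Finset.sup'_le _ _ fun j hj => by rw [hPfsub j hj]
          · exact Finset.le_sup' (fun j => -(x j - p j) / p j)
              (Finset.mem_filter.2 ⟨Finset.mem_univ i', by rw [hp1]; norm_num⟩)
        have hxle : x i' ≤ 1 := simplex_le_one hx i'
        have hSval : S = -(x i' - p i') := by
          rw [hSdef, hsup, hp1, div_one]
          exact max_eq_right (by linarith)
        simp only [htdef, hSval, hp1]; ring
      have hrep : ∀ j, ∑ i', t i' * (pure' i' j - p j) = x j - p j := by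
        intro j
        rw [rep_sum p t j, htsum]
        simp only [htdef]; ring
      -- the perturbed population states
      set Ψ : Fin k → ℝ := fun j => ∑ i : Fin (k+2), (r i j - p j) with hΨdef
      set c : ℝ → Fin (k+2) → ℝ :=
        fun θ i => θ + (if h : (i:ℕ) < k then t (⟨(i:ℕ), h⟩ : Fin k) else 0) with hcdef
      have hmixc : ∀ θ : ℝ, ∀ j,
          p j + ∑ i : Fin (k+2), c θ i * (r i j - p j) = x j + θ * Ψ j := by
        intro θ j
        have hsplit : ∑ i : Fin (k+2), c θ i * (r i j - p j)
            = θ * Ψ j + ∑ i : Fin (k+2),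
                (if h : (i:ℕ) < k then t (⟨(i:ℕ), h⟩ : Fin k) else 0) * (r i j - p j) := by
          simp only [hcdef, hΨdef]
          rw [Finset.mul_sum, ← Finset.sum_add_distrib]
          exact Finset.sum_congr rfl fun i _ => by ring
        have hsecond : ∑ i : Fin (k+2),
            (if h : (i:ℕ) < k then t (⟨(i:ℕ), h⟩ : Fin k) else 0) * (r i j - p j)
            = x j - p j := by
          rw [Fin.sum_univ_add]
          have hfirst : ∀ i' : Fin k,
              (if h : ((Fin.castAdd 2 i' : Fin (k+2)) : ℕ) < k
                then t (⟨((Fin.castAdd 2 i' : Fin (k+2)) : ℕ), h⟩ : Fin k) else 0)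
                * (r (Fin.castAdd 2 i') j - p j)
              = t i' * (pure' i' j - p j) := by
            intro i'
            have hlt : ((Fin.castAdd 2 i' : Fin (k+2)) : ℕ) < k := by
              simp [Fin.coe_castAdd]
            rw [dif_pos hlt]
            have hfin : (⟨((Fin.castAdd 2 i' : Fin (k+2)) : ℕ), hlt⟩ : Fin k) = i' := by
              ext; simp [Fin.coe_castAdd]
            rw [hfin]
            have hri' : r (Fin.castAdd 2 i')
                = (if pure' i' = p then pure' i₀ else pure' i') := by
              simp only [hrdef]
              rw [dif_pos hlt, hfin]
            rw [hri']
            by_cases hpi' : pure' i' = p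
            · rw [if_pos hpi', htp i' hpi', zero_mul, zero_mul]
            · rw [if_neg hpi']
          rw [Finset.sum_congr rfl fun i' _ => hfirst i']
          have hzero : ∀ i'' : Fin 2,
              (if h : ((Fin.natAdd k i'' : Fin (k+2)) : ℕ) < k
                then t (⟨((Fin.natAdd k i'' : Fin (k+2)) : ℕ), h⟩ : Fin k) else 0)
                * (r (Fin.natAdd k i'') j - p j) = 0 := by
            intro i''
            rw [dif_neg (by simp [Fin.coe_natAdd]), zero_mul]
          rw [Finset.sum_congr rfl fun i'' _ => hzero i'', Finset.sum_const_zero, add_zero]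
          exact hrep j
        rw [hsplit, hsecond]; ring
      have hθc : ∀ θ : ℝ, 0 < θ → θ ≤ e/2 → ∀ i : Fin (k+2),
          payoff U (r i) (fun j => x j + θ * Ψ j) < payoff U p (fun j => x j + θ * Ψ j) := by
        intro θ hθ0 hθe i
        have hc : ∀ i', c θ i' ∈ Set.Ioc (0:ℝ) e := by
          intro i'
          constructor
          · simp only [hcdef]
            split_ifs with h
            · have := ht0 (⟨(i':ℕ), h⟩ : Fin k); linarith
            · linarith
          · simp only [hcdef]
            split_ifs with h
            · exact (add_le_add hθe (hte _)).trans_eq (by ring)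
            · linarith
        have hmain := hE (c θ) hc i
        have hmix2 : mix p r (c θ) = fun j => x j + θ * Ψ j := by
          funext j; rw [mix_apply]; exact hmixc θ j
        rw [hmix2] at hmain
        exact hmain
      -- pass to the limit θ → 0
      have hlt : ((Fin.castAdd 2 i : Fin (k+2)) : ℕ) < k := by simp [Fin.coe_castAdd]
      have hfin : (⟨((Fin.castAdd 2 i : Fin (k+2)) : ℕ), hlt⟩ : Fin k) = i := by
        ext; simp [Fin.coe_castAdd]
      have hri : r (Fin.castAdd 2 i) = pure' i := by
        simp only [hrdef]
        rw [dif_pos hlt, hfin, if_neg hpi]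
      have hlin : ∀ θ : ℝ, 0 < θ → θ ≤ e/2 →
          0 < (payoff U p x - payoff U (pure' i) x)
            + θ * (payoff U p Ψ - payoff U (pure' i) Ψ) := by
        intro θ h1 h2
        have h3 := hθc θ h1 h2 (Fin.castAdd 2 i)
        rw [hri] at h3
        rw [pay_shift, pay_shift] at h3
        linarith
      have := zero_le_of_lin (by linarith : (0:ℝ) < e/2) hlin
      linarith
    intro s hs
    calc payoff U s x = ∑ i, s i * payoff U (pure' i) x := payoff_eq_sum_pure U s x
      _ ≤ ∑ i, s i * payoff U p x :=
          Finset.sum_le_sum fun i _ => mul_le_mul_of_nonneg_left (hWpure i) (hs.1 i)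
      _ = payoff U p x := by rw [← Finset.sum_mul, hs.2, one_mul]
  -- ======== strict part ========
  set δ' : ℝ := (min δ pm)/2 with hδ'def
  have hδ'pos : 0 < δ' := by
    have := lt_min hδpos hpm_pos; rw [hδ'def]; linarith
  have hS : ∀ x ∈ Δ' k, x ≠ p → (∀ j, |x j - p j| < δ') → payoff U x x < payoff U p x := by
    intro x hx hxne hclose
    have hJex : ∃ j, x j < p j := by
      by_contra hcon; push_neg at hcon
      apply hxne; funext j
      have hsum0 : ∑ j, (x j - p j) = 0 := by
        rw [Finset.sum_sub_distrib, hx.2, hp.2]; ring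
      have hall : ∀ j ∈ Finset.univ, (0:ℝ) ≤ x j - p j := fun j _ => by linarith [hcon j]
      have := (Finset.sum_eq_zero_iff_of_nonneg hall).1 hsum0 j (Finset.mem_univ j)
      linarith
    set Jf := Finset.univ.filter (fun j => x j < p j) with hJfdef
    have hJne : Jf.Nonempty := ⟨hJex.choose, by
      rw [hJfdef, Finset.mem_filter]; exact ⟨Finset.mem_univ _, hJex.choose_spec⟩⟩
    set T : ℝ := Jf.inf' hJne (fun j => p j / (p j - x j)) with hTdef
    have hT1 : 1 ≤ T := by
      rw [hTdef]; refine Finset.le_inf' _ _ fun j hj => ?_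
      have hj2 : x j < p j := (Finset.mem_filter.1 hj).2
      rw [le_div_iff₀ (by linarith)]
      have := hx.1 j; linarith
    have hTpos : 0 < T := by linarith
    obtain ⟨js, hjsmem, hjs⟩ := Finset.exists_mem_eq_inf' hJne (fun j => p j / (p j - x j))
    have hjs2 : x js < p js := (Finset.mem_filter.1 hjsmem).2
    have hjs0 : 0 ≤ x js := hx.1 js
    have hpjs : 0 < p js := lt_of_le_of_lt hjs0 hjs2
    set rr : Fin k → ℝ := fun j => p j + T * (x j - p j) with hrrdef
    have hTval : T = p js / (p js - x js) := by rw [hTdef, hjs]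
    have hrrstar : rr js = 0 := by
      simp only [hrrdef]
      rw [hTval]
      have hne' : p js - x js ≠ 0 := by linarith
      field_simp
      ring
    have hrrΔ : rr ∈ Δ' k := by
      constructor
      · intro j
        by_cases hj : x j < p j
        · have hTle : T ≤ p j / (p j - x j) := by
            rw [hTdef]; exact Finset.inf'_le _ (Finset.mem_filter.2 ⟨Finset.mem_univ j, hj⟩)
          have h2 : T * (p j - x j) ≤ p j := by
            rw [← le_div_iff₀ (by linarith : (0:ℝ) < p j - x j)]; exact hTle
          simp only [hrrdef]; nlinarith
        · push_neg at hj
          simp only [hrrdef]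
          have := hp.1 j
          nlinarith
      · simp only [hrrdef]
        rw [Finset.sum_add_distrib, ← Finset.mul_sum, Finset.sum_sub_distrib, hx.2, hp.2]
        ring
    have hrrne : rr ≠ p := by
      intro hcon
      have h1 := congrFun hcon js
      rw [hrrstar] at h1
      linarith
    clear_value rr
    set lam : ℝ := 1 / T with hlamdef
    have hlampos : 0 < lam := by rw [hlamdef]; positivity
    have hxrep : ∀ j, x j = p j + lam * (rr j - p j) := by
      intro j; simp only [hrrdef, hlamdef]
      field_simp
      ring
    have hlamhalf : lam ≤ 1/2 := by
      have h1 : |x js - p js| < δ' := hclose js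
      have h2 : x js - p js = lam * (rr js - p js) := by
        have := hxrep js; linarith
      rw [hrrstar] at h2
      have h3 : p js - x js = lam * p js := by nlinarith [h2]
      have h4 : pm ≤ p js := hpm_le js hpjs
      have h5 : p js - x js < δ' := by
        rw [abs_lt] at h1; linarith [h1.1]
      have h6 : δ' ≤ pm/2 := by
        rw [hδ'def]; have := min_le_right δ pm; linarith
      nlinarith [hpjs]
    set x2 : Fin k → ℝ := fun j => p j + (2*lam) * (rr j - p j) with hx2def
    have hx2Δ : x2 ∈ Δ' k := z_mem_simplex hp hrrΔ (by positivity) (by linarith)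
    have hx2close : ∀ j, |x2 j - p j| ≤ δ := by
      intro j
      have h7 : lam * (rr j - p j) = x j - p j := by linarith [hxrep j]
      have h8 : x2 j - p j = 2*(x j - p j) := by
        simp only [hx2def]; nlinarith [h7]
      rw [h8, abs_mul, abs_two]
      have h9 := hclose j
      have h10 := min_le_left δ pm
      rw [hδ'def] at h9
      linarith
    clear_value x2
    have hweak2 : payoff U rr x2 ≤ payoff U p x2 := hW x2 hx2Δ hx2close rr hrrΔ
    set A : ℝ := payoff U rr p - payoff U p p with hAdef
    set B : ℝ := (payoff U rr rr - payoff U p rr) - A with hBdef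
    have hevalz : ∀ τ : ℝ, payoff U rr (fun j => p j + τ * (rr j - p j))
        - payoff U p (fun j => p j + τ * (rr j - p j)) = A + τ * B := by
      intro τ; rw [pay_line_right, pay_line_right]; simp only [hAdef, hBdef]; ring
    have hAB2 : A + (2*lam) * B ≤ 0 := by
      have h1 := hevalz (2*lam)
      rw [← hx2def] at h1
      linarith
    obtain ⟨e2, ⟨he2pos, he2lt⟩, hE2⟩ := H 2 le_rfl (fun _ => rr) (fun _ => hrrΔ) (fun _ => hrrne)
    have hESS : ∀ η : ℝ, 0 < η → η ≤ e2 → A + (2*η) * B < 0 := by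
      intro η h1 h2
      have h3 := hE2 (fun _ : Fin 2 => η) (fun _ => Set.mem_Ioc.mpr ⟨h1, h2⟩) 0
      have hmixeq : mix p (fun _ : Fin 2 => rr) (fun _ : Fin 2 => η)
          = fun j => p j + (2*η) * (rr j - p j) := by
        funext j; rw [mix_apply]
        rw [Finset.sum_const, Finset.card_univ, Fintype.card_fin]
        push_cast; ring
      rw [hmixeq] at h3
      have h4 := hevalz (2*η)
      linarith
    have hfinal : A + lam * B < 0 := by
      by_cases hBpos : 0 < B
      · nlinarith [hAB2, hlampos]
      · push_neg at hBpos
        set η : ℝ := min (lam/2) e2 with hηdef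
        have hη1 : 0 < η := lt_min (by linarith) he2pos
        have h3 := hESS η hη1 (min_le_right _ _)
        have h4 : 2*η ≤ lam := by
          have := min_le_left (lam/2) e2; rw [hηdef]; linarith
        have h5 : (lam - 2*η) * B ≤ 0 := mul_nonpos_of_nonneg_of_nonpos (by linarith) hBpos
        nlinarith [h3, h5]
    have hxfun : x = fun j => p j + lam * (rr j - p j) := funext hxrep
    have h9 := pay_line_left U x p rr lam
    rw [← hxfun] at h9
    have h10 := hevalz lam
    rw [← hxfun] at h10
    nlinarith [hfinal, hlampos, h9, h10]
  -- ======== assemble ========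
  refine ⟨Δ' k ∩ {y | ∀ j, |y j - p j| < δ'}, ?_, Set.inter_subset_left, ?_⟩
  · refine Filter.inter_mem self_mem_nhdsWithin (mem_nhdsWithin_of_mem_nhds ?_)
    rw [Metric.mem_nhds_iff]
    refine ⟨δ', hδ'pos, fun y hy j => ?_⟩
    have h1 := dist_le_pi_dist y p j
    rw [Real.dist_eq] at h1
    exact lt_of_le_of_lt h1 hy
  · intro s hs hsne x hx hxne
    have hδ'leδ : δ' ≤ δ := by
      rw [hδ'def]; have := min_le_left δ pm; linarith
    have hxδ : ∀ j, |x j - p j| ≤ δ := fun j => le_trans (hx.2 j).le hδ'leδ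
    exact ⟨hW x hx.1 hxδ s hs.1, hS x hx.1 hxne hx.2⟩

end StmtAux

theorem stmt_6 {k : ℕ} (U : Fin k → Fin k → ℝ) (p : Fin k → ℝ) (hp : p ∈ Δ' k) :
    (∀ m : ℕ, 2 ≤ m → StableAgainst U m p) ↔ LocallyDominant U p :=
  ⟨fun H => StmtAux.forward U p hp H, fun H => StmtAux.backward U p hp H⟩
end
end

section
/- If p is locally dominant, then p is an ESS and moreover u(p,r) ≥ u(q,r) for every q ∈ BR(p)\{p} and every r ∈ Δ. -/
open Finset Set

noncomputable section

lemma payoff_left {k : ℕ} (U : Fin k → Fin k → ℝ) (a b : ℝ) (x y q : Fin k → ℝ) :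
    payoff U (fun j => a * x j + b * y j) q = a * payoff U x q + b * payoff U y q := by
  simp only [payoff, Finset.mul_sum, ← Finset.sum_add_distrib]
  exact Finset.sum_congr rfl fun i _ => Finset.sum_congr rfl fun j _ => by ring

lemma payoff_right {k : ℕ} (U : Fin k → Fin k → ℝ) (a b : ℝ) (x q r : Fin k → ℝ) :
    payoff U x (fun j => a * q j + b * r j) = a * payoff U x q + b * payoff U x r := by
  simp only [payoff, Finset.mul_sum, ← Finset.sum_add_distrib]
  exact Finset.sum_congr rfl fun i _ => Finset.sum_congr rfl fun j _ => by ring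

lemma mix_mem {k : ℕ} {p r : Fin k → ℝ} (hp : p ∈ Δ' k) (hr : r ∈ Δ' k) {ε : ℝ}
    (h0 : 0 ≤ ε) (h1 : ε ≤ 1) : (fun j => ε * r j + (1 - ε) * p j) ∈ Δ' k := by
  have h := (convex_stdSimplex ℝ (Fin k)) hr hp (a := ε) (b := 1 - ε) h0 (by linarith) (by ring)
  have heq : (fun j => ε * r j + (1 - ε) * p j) = ε • r + (1 - ε) • p := by
    funext j; simp [smul_eq_mul]
  rw [Δ', heq]; exact h

lemma mix_ne {k : ℕ} {p r : Fin k → ℝ} (hrp : r ≠ p) {ε : ℝ} (h0 : 0 < ε) :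
    (fun j => ε * r j + (1 - ε) * p j) ≠ p := by
  obtain ⟨j, hj⟩ := Function.ne_iff.mp hrp
  intro heq
  have h1 := congrFun heq j
  apply hj
  have h2 : ε * (r j - p j) = 0 := by linarith
  rcases mul_eq_zero.mp h2 with h | h
  · exact absurd h (ne_of_gt h0)
  · linarith

lemma mix_in_V {k : ℕ} {V : Set (Fin k → ℝ)} {p : Fin k → ℝ}
    (hV : V ∈ nhdsWithin p (Δ' k)) (hp : p ∈ Δ' k) {r : Fin k → ℝ} (hr : r ∈ Δ' k)
    (hrp : r ≠ p) :
    ∃ e ∈ Set.Ioo (0:ℝ) 1, ∀ ε : ℝ, 0 < ε → ε ≤ e →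
      (fun j => ε * r j + (1 - ε) * p j) ∈ V ∧ (fun j => ε * r j + (1 - ε) * p j) ≠ p := by
  obtain ⟨t, htopen, hpt, hts⟩ := mem_nhdsWithin.mp hV
  have hcont : Continuous (fun ε : ℝ => fun j => ε * r j + (1 - ε) * p j) := by
    apply continuous_pi; intro j; fun_prop
  have h0 : (fun j => (0:ℝ) * r j + (1 - 0) * p j) = p := by funext j; simp
  have hnh : (fun ε : ℝ => fun j => ε * r j + (1 - ε) * p j) ⁻¹' t ∈ nhds (0:ℝ) :=
    hcont.continuousAt.preimage_mem_nhds (htopen.mem_nhds (by show (fun j => (0:ℝ) * r j + (1 - 0) * p j) ∈ t; rw [h0]; exact hpt))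
  obtain ⟨δ, hδ, hball⟩ := Metric.mem_nhds_iff.mp hnh
  refine ⟨min (δ/2) (1/2), ⟨by positivity, lt_of_le_of_lt (min_le_right _ _) (by norm_num)⟩, ?_⟩
  intro ε hε0 hεe
  have hεδ : ε ≤ δ/2 := le_trans hεe (min_le_left _ _)
  have hε1 : ε ≤ 1/2 := le_trans hεe (min_le_right _ _)
  have hmem : ε ∈ Metric.ball (0:ℝ) δ := by
    simp [Real.dist_eq, abs_of_pos hε0]; linarith
  exact ⟨hts ⟨hball hmem, mix_mem hp hr hε0.le (by linarith)⟩, mix_ne hrp hε0⟩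

theorem stmt_7 {k : ℕ} (U : Fin k → Fin k → ℝ) (p : Fin k → ℝ) (hp : p ∈ Δ' k)
    (h : LocallyDominant U p) :
    IsESS U p ∧ ∀ q ∈ BR U p, q ≠ p → ∀ r ∈ Δ' k, payoff U p r ≥ payoff U q r := by
  obtain ⟨V, hV, hVΔ, hdom⟩ := h
  constructor
  · refine ⟨hp, ?_⟩
    intro r hr hrp
    obtain ⟨e, he, hkey⟩ := mix_in_V hV hp hr hrp
    refine ⟨e, he, ?_⟩
    intro ε hε0 hεe
    obtain ⟨hmV, hmp⟩ := hkey ε hε0 hεe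
    have hgt := (hdom _ hmV hmp _ hmV hmp).2
    rw [payoff_left] at hgt
    have h2 : ε * payoff U r (fun j => ε * r j + (1 - ε) * p j)
        < ε * payoff U p (fun j => ε * r j + (1 - ε) * p j) := by linarith
    exact (mul_lt_mul_iff_right₀ hε0).mp h2
  · rintro q ⟨hqΔ, hqb⟩ hqp r hr
    have hA0 : payoff U p p ≤ payoff U q p := hqb p hp
    obtain ⟨t₀, ht₀, hw⟩ := mix_in_V hV hp hqΔ hqp
    -- Step 1: payoff U q p ≤ payoff U p p
    have key : ∀ t : ℝ, 0 < t → t ≤ t₀ →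
        (1 - t) * (payoff U q p - payoff U p p) <
          t * (payoff U p q - payoff U q q) := by
      intro t h0 h1
      obtain ⟨hwV, hwp⟩ := hw t h0 h1
      have hgt := (hdom _ hwV hwp _ hwV hwp).2
      rw [payoff_left] at hgt
      have h2 : payoff U q (fun j => t * q j + (1 - t) * p j)
          < payoff U p (fun j => t * q j + (1 - t) * p j) := by
        have h3 : t * payoff U q (fun j => t * q j + (1 - t) * p j)
            < t * payoff U p (fun j => t * q j + (1 - t) * p j) := by linarith
        exact (mul_lt_mul_iff_right₀ h0).mp h3
      rw [payoff_right, payoff_right] at h2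
      linarith
    have hA : payoff U q p ≤ payoff U p p := by
      by_contra hc
      push_neg at hc
      set A := payoff U q p - payoff U p p with hAdef
      set B := payoff U p q - payoff U q q with hBdef
      have hApos : 0 < A := by simp [hAdef]; linarith
      have hBpos : 0 < B := by
        have := key t₀ ht₀.1 le_rfl
        nlinarith [ht₀.1, ht₀.2]
      set t := min t₀ (A / (2 * (A + B))) with htdef
      have ht0 : 0 < t := lt_min ht₀.1 (by positivity)
      have := key t ht0 (min_le_left _ _)
      have htle : t ≤ A / (2 * (A + B)) := min_le_right _ _
      have hAB : 0 < A + B := by linarith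
      have h4 : t * (A + B) ≤ A / 2 := by
        calc t * (A + B) ≤ (A / (2 * (A + B))) * (A + B) := by
              exact mul_le_mul_of_nonneg_right htle hAB.le
          _ = A / 2 := by field_simp
      nlinarith
    by_cases hrpeq : r = p
    · rw [hrpeq]; exact hA
    · obtain ⟨s₀, hs₀, hrs⟩ := mix_in_V hV hp hr hrpeq
      obtain ⟨hrsV, hrsp⟩ := hrs s₀ hs₀.1 le_rfl
      obtain ⟨hwV, hwp⟩ := hw t₀ ht₀.1 le_rfl
      have hge := (hdom _ hwV hwp _ hrsV hrsp).1
      rw [payoff_left] at hge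
      have h2 : payoff U q (fun j => s₀ * r j + (1 - s₀) * p j)
          ≤ payoff U p (fun j => s₀ * r j + (1 - s₀) * p j) := by
        have h3 : t₀ * payoff U q (fun j => s₀ * r j + (1 - s₀) * p j)
            ≤ t₀ * payoff U p (fun j => s₀ * r j + (1 - s₀) * p j) := by linarith
        exact le_of_mul_le_mul_left h3 ht₀.1
      rw [payoff_right, payoff_right] at h2
      have h5 : 0 ≤ (1 - s₀) * (payoff U q p - payoff U p p) :=
        mul_nonneg (by linarith [hs₀.2]) (by linarith)
      have h6 : s₀ * payoff U q r ≤ s₀ * payoff U p r := by linarith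
      exact le_of_mul_le_mul_left h6 hs₀.1
end
end

section
/- Every strict symmetric Nash equilibrium is strictly locally dominant. -/
open Finset Set

noncomputable section

/-- The column payoff `g i r = ∑ j, r j * U i j`. -/
def gcol {k : ℕ} (U : Fin k → Fin k → ℝ) (i : Fin k) (r : Fin k → ℝ) : ℝ :=
  ∑ j, r j * U i j

lemma payoff_eq_sum_gcol {k : ℕ} (U : Fin k → Fin k → ℝ) (s r : Fin k → ℝ) :
    payoff U s r = ∑ i, s i * gcol U i r := by
  unfold payoff gcol
  refine Finset.sum_congr rfl fun i _ => ?_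
  rw [Finset.mul_sum]
  refine Finset.sum_congr rfl fun j _ => by ring

lemma pure'_mem_simplex {k : ℕ} (i : Fin k) : pure' i ∈ Δ' k := by
  constructor
  · intro j; unfold pure'; positivity
  · simp [pure']

lemma payoff_pure' {k : ℕ} (U : Fin k → Fin k → ℝ) (i : Fin k) (r : Fin k → ℝ) :
    payoff U (pure' i) r = gcol U i r := by
  rw [payoff_eq_sum_gcol]
  simp [pure']

lemma gcol_continuous {k : ℕ} (U : Fin k → Fin k → ℝ) (i : Fin k) :
    Continuous (gcol U i) := by
  unfold gcol
  exact continuous_finset_sum _ fun j _ => (continuous_apply j).mul continuous_const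

theorem stmt_8 {k : ℕ} (U : Fin k → Fin k → ℝ) (p : Fin k → ℝ) (hp : p ∈ Δ' k)
    (hstrict : ∀ q ∈ Δ' k, q ≠ p → payoff U p p > payoff U q p) :
    StrictlyLocallyDominant U p := by
  classical
  -- Step 1: p is a pure strategy.
  have hnonneg : ∀ i, 0 ≤ p i := hp.1
  have hsum : ∑ i, p i = 1 := hp.2
  have hterm_nonneg : ∀ i, 0 ≤ p i * (payoff U p p - payoff U (pure' i) p) := by
    intro i
    by_cases hpi : pure' i = p
    · rw [hpi]; simp
    · have := hstrict (pure' i) (pure'_mem_simplex i) hpi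
      have h1 : 0 ≤ payoff U p p - payoff U (pure' i) p := by linarith
      exact mul_nonneg (hnonneg i) h1
  have hsum_zero : ∑ i, p i * (payoff U p p - payoff U (pure' i) p) = 0 := by
    have h1 : ∑ i, p i * (payoff U p p - payoff U (pure' i) p)
        = (∑ i, p i) * payoff U p p - ∑ i, p i * payoff U (pure' i) p := by
      rw [Finset.sum_mul, ← Finset.sum_sub_distrib]
      refine Finset.sum_congr rfl fun i _ => by ring
    have h2 : ∑ i, p i * payoff U (pure' i) p = payoff U p p := by
      rw [payoff_eq_sum_gcol U p p]
      refine Finset.sum_congr rfl fun i _ => by rw [payoff_pure']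
    rw [h1, h2, hsum]; ring
  obtain ⟨i0, hi0pos⟩ : ∃ i, 0 < p i := by
    by_contra h
    push_neg at h
    have : ∀ i, p i = 0 := fun i => le_antisymm (h i) (hnonneg i)
    simp [this] at hsum
  have hterm0 : p i0 * (payoff U p p - payoff U (pure' i0) p) = 0 := by
    have := (Finset.sum_eq_zero_iff_of_nonneg (fun i _ => hterm_nonneg i)).mp hsum_zero
    exact this i0 (Finset.mem_univ i0)
  have hpp : p = pure' i0 := by
    by_contra hne
    have := hstrict (pure' i0) (pure'_mem_simplex i0) (fun h => hne h.symm)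
    have : 0 < p i0 * (payoff U p p - payoff U (pure' i0) p) := by
      apply mul_pos hi0pos; linarith
    linarith
  -- Step 2: the open condition defining V.
  set W : Set (Fin k → ℝ) := {r | ∀ i ∈ Finset.univ.erase i0, gcol U i r < gcol U i0 r}
    with hW
  have hWopen : IsOpen W := by
    have : W = ⋂ i ∈ Finset.univ.erase i0, {r | gcol U i r < gcol U i0 r} := by
      ext r; simp [hW]
    rw [this]
    exact isOpen_biInter_finset fun i _ =>
      isOpen_lt (gcol_continuous U i) (gcol_continuous U i0)
  have hpW : p ∈ W := by
    intro i hi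
    have hine : i ≠ i0 := Finset.ne_of_mem_erase hi
    have hpure_ne : pure' i ≠ p := by
      rw [hpp]
      intro h
      have := congrFun h i
      simp [pure', hine] at this
    have := hstrict (pure' i) (pure'_mem_simplex i) hpure_ne
    rw [payoff_pure'] at this
    have hppval : payoff U p p = gcol U i0 p := by
      rw [hpp, payoff_pure']
    linarith [hppval ▸ this]
  refine ⟨Δ' k ∩ W, ?_, Set.inter_subset_left, ?_⟩
  · rw [mem_nhdsWithin]
    exact ⟨W, hWopen, hpW, fun x hx => ⟨hx.2, hx.1⟩⟩
  · rintro s ⟨hsΔ, _⟩ hsne r ⟨hrΔ, hrW⟩ _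
    -- key identity
    have hkey : payoff U p r - payoff U s r
        = ∑ i ∈ Finset.univ.erase i0, s i * (gcol U i0 r - gcol U i r) := by
      have hL : payoff U p r = gcol U i0 r := by rw [hpp, payoff_pure']
      have hserase : ∑ i ∈ Finset.univ.erase i0, s i = 1 - s i0 := by
        have := Finset.add_sum_erase Finset.univ s (Finset.mem_univ i0)
        rw [hsΔ.2] at this
        linarith
      have hS : payoff U s r
          = s i0 * gcol U i0 r + ∑ i ∈ Finset.univ.erase i0, s i * gcol U i r := by
        rw [payoff_eq_sum_gcol]
        exact (Finset.add_sum_erase Finset.univ (fun i => s i * gcol U i r)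
          (Finset.mem_univ i0)).symm
      rw [hL, hS]
      have hR : ∑ i ∈ Finset.univ.erase i0, s i * (gcol U i0 r - gcol U i r)
          = (∑ i ∈ Finset.univ.erase i0, s i) * gcol U i0 r
            - ∑ i ∈ Finset.univ.erase i0, s i * gcol U i r := by
        rw [Finset.sum_mul, ← Finset.sum_sub_distrib]
        exact Finset.sum_congr rfl fun i _ => by ring
      rw [hR, hserase]
      ring
    have hpos : 0 < ∑ i ∈ Finset.univ.erase i0, s i * (gcol U i0 r - gcol U i r) := by
      apply Finset.sum_pos'
      · intro i hi
        have := hrW i hi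
        exact mul_nonneg (hsΔ.1 i) (by linarith)
      · by_contra h
        push_neg at h
        have hz : ∀ i ∈ Finset.univ.erase i0, s i = 0 := by
          intro i hi
          have hpos' : 0 < gcol U i0 r - gcol U i r := by
            have := hrW i hi; linarith
          have hle := h i hi
          rcases lt_or_eq_of_le (hsΔ.1 i) with hlt | heq
          · exfalso; exact absurd (mul_pos hlt hpos') (not_lt.mpr hle)
          · exact heq.symm
        apply hsne
        have hsi0 : s i0 = 1 := by
          have := Finset.add_sum_erase Finset.univ s (Finset.mem_univ i0)
          rw [hsΔ.2, Finset.sum_eq_zero hz] at this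
          linarith
        funext j
        rw [hpp]
        by_cases hj : j = i0
        · simp [pure', hj, hsi0]
        · have : s j = 0 := hz j (Finset.mem_erase.mpr ⟨hj, Finset.mem_univ j⟩)
          simp [pure', hj, this]
    linarith [hkey ▸ hpos]
end
end

section
/- In the 2×2 symmetric game with payoff matrix U = [[-1,0],[0,0]], the pure strategy e² is not a strict symmetric Nash equilibrium (indeed BR(e²) = Δ), yet e² satisfies: u(e²,q) > u(q,q) for all q ≠ e², and u(e²,r) > u(q,r) for all q,r ≠ e². Consequently e² is evolutionarily stable against m mutations for every m ≥ 1. -/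
open Finset Set

noncomputable section

lemma pay_eq (p q : Fin 2 → ℝ) : payoff ![![-1, 0], ![0, 0]] p q = -(p 0 * q 0) := by
  simp [payoff, Fin.sum_univ_two]

lemma pos0 {q : Fin 2 → ℝ} (hq : q ∈ Δ' 2) (h : q ≠ ![0, 1]) : 0 < q 0 := by
  obtain ⟨h1, h2⟩ := hq
  rcases (h1 0).lt_or_eq with hp | hp
  · exact hp
  · exfalso; apply h; funext i
    have hs : q 0 + q 1 = 1 := by simpa [Fin.sum_univ_two] using h2
    fin_cases i
    · simpa using hp.symm
    · show q 1 = 1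
      linarith

theorem stmt_9 :
    let U : Fin 2 → Fin 2 → ℝ := ![![-1, 0], ![0, 0]]
    let e2 : Fin 2 → ℝ := ![0, 1]
    (BR U e2 = Δ' 2) ∧
    ¬ (∀ q ∈ Δ' 2, q ≠ e2 → payoff U e2 e2 > payoff U q e2) ∧
    (∀ q ∈ Δ' 2, q ≠ e2 → payoff U e2 q > payoff U q q) ∧
    (∀ q ∈ Δ' 2, ∀ r ∈ Δ' 2, q ≠ e2 → r ≠ e2 → payoff U e2 r > payoff U q r) ∧
    (∀ m : ℕ, 1 ≤ m → StableAgainst U m e2) := by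
  intro U e2
  have hU : U = ![![-1, 0], ![0, 0]] := rfl
  have he2 : e2 = ![0, 1] := rfl
  have he20 : e2 0 = 0 := rfl
  have he2Δ : e2 ∈ Δ' 2 := by
    constructor
    · intro i; fin_cases i <;> norm_num [e2]
    · simp [Fin.sum_univ_two, e2]
  refine ⟨?_, ?_, ?_, ?_, ?_⟩
  · ext q
    simp only [BR, Set.mem_setOf_eq]
    constructor
    · rintro ⟨hq, -⟩; exact hq
    · intro hq
      refine ⟨hq, fun r hr => ?_⟩
      rw [hU, pay_eq, pay_eq, he20]
      simp
  · intro h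
    have h1Δ : (![1, 0] : Fin 2 → ℝ) ∈ Δ' 2 := by
      constructor
      · intro i; fin_cases i <;> norm_num
      · simp [Fin.sum_univ_two]
    have hne : (![1, 0] : Fin 2 → ℝ) ≠ e2 := by
      intro hcon
      have : (![1, 0] : Fin 2 → ℝ) 0 = e2 0 := by rw [hcon]
      norm_num [e2] at this
    have := h ![1, 0] h1Δ hne
    rw [hU, pay_eq, pay_eq, he20] at this
    norm_num at this
  · intro q hq hne
    rw [hU, pay_eq, pay_eq, he20]
    have := pos0 hq hne
    nlinarith
  · intro q hq r hr hqe hre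
    rw [hU, pay_eq, pay_eq, he20]
    have h1 := pos0 hq hqe
    have h2 := pos0 hr hre
    nlinarith
  · intro m hm r hrΔ hrne
    refine ⟨1/2, by norm_num, fun ε hε i => ?_⟩
    rw [hU, pay_eq, pay_eq]
    have hmix0 : 0 < mix e2 r ε 0 := by
      have : mix e2 r ε 0 = ∑ j, ε j * r j 0 := by
        simp [mix, he20]
      rw [this]
      refine Finset.sum_pos' (fun j _ => mul_nonneg (hε j).1.le ((hrΔ j).1 0)) ?_
      exact ⟨i, Finset.mem_univ i, mul_pos (hε i).1 (pos0 (hrΔ i) (hrne i))⟩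
    have := pos0 (hrΔ i) (hrne i)
    rw [he20]
    nlinarith
end
end

section
/- If a strategy p is evolutionarily stable against multiple mutations, then p is a pure strategy (p = eⁱ for some i). -/
open Finset Set

noncomputable section

theorem stmt_10 {k : ℕ} (U : Fin k → Fin k → ℝ) (p : Fin k → ℝ) (hp : p ∈ Δ' k)
    (h : ∀ m : ℕ, 2 ≤ m → StableAgainst U m p) :
    ∃ i : Fin k, p = pure' i := by
  by_contra hpure
  push_neg at hpure
  obtain ⟨hpn, hps⟩ := hp
  -- find a coordinate with positive mass
  have ha : ∃ a : Fin k, 0 < p a := by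
    by_contra hc
    push_neg at hc
    have : ∑ j, p j ≤ 0 := Finset.sum_nonpos fun j _ => hc j
    linarith
  obtain ⟨a, hpa⟩ := ha
  -- find a second coordinate with positive mass
  have hb : ∃ b : Fin k, b ≠ a ∧ 0 < p b := by
    by_contra hc
    push_neg at hc
    have hz : ∀ b : Fin k, b ≠ a → p b = 0 := fun b hba =>
      le_antisymm (hc b hba) (hpn b)
    have h1 : p a = 1 := by
      have := Finset.sum_eq_single_of_mem a (Finset.mem_univ a)
        (fun b _ hba => hz b hba)
      rw [this] at hps; exact hps
    exact hpure a (funext fun j => by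
      by_cases hja : j = a
      · simp [pure', hja, h1]
      · simp [pure', hja, hz j hja])
  obtain ⟨b, hba, hpb⟩ := hb
  set δ : ℝ := min (p a) (p b) with hδdef
  have hδ : 0 < δ := lt_min hpa hpb
  set v : Fin k → ℝ := fun j => if j = a then δ else if j = b then -δ else 0 with hvdef
  have hvsum : ∑ j, v j = 0 := by
    have : ∀ j, v j = δ * pure' a j + (-δ) * pure' b j := by
      intro j
      by_cases hja : j = a <;> by_cases hjb : j = b <;>
        simp_all [pure', v] <;> simp [hja, hjb]
    simp only [this, Finset.sum_add_distrib, ← Finset.mul_sum]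
    have hpa1 : ∑ j, pure' a j = 1 := by simp [pure']
    have hpb1 : ∑ j, pure' b j = 1 := by simp [pure']
    rw [hpa1, hpb1]; ring
  set r : Fin k → ℝ := fun j => p j + v j with hrdef
  set r' : Fin k → ℝ := fun j => p j - v j with hr'def
  have hva : v a = δ := by simp [v]
  have hvb : v b = -δ := by simp [v, hba]
  have hvnonneg : ∀ j, -p j ≤ v j ∧ v j ≤ p j := by
    intro j
    by_cases hja : j = a
    · subst hja; rw [hva]
      have h1 := min_le_left (p j) (p b)
      constructor <;> linarith
    · by_cases hjb : j = b
      · subst hjb; rw [hvb]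
        have h1 := min_le_right (p a) (p j)
        constructor <;> linarith
      · have : v j = 0 := by simp [v, hja, hjb]
        rw [this]
        have := hpn j
        constructor <;> linarith
  have hrS : r ∈ Δ' k := by
    constructor
    · intro j; have := (hvnonneg j).1; simp only [r]; linarith
    · simp [r, Finset.sum_add_distrib, hps, hvsum]
  have hr'S : r' ∈ Δ' k := by
    constructor
    · intro j; have := (hvnonneg j).2; simp only [r']; linarith
    · simp [r', Finset.sum_sub_distrib, hps, hvsum]
  have hrne : r ≠ p := by
    intro hEq
    have := congrFun hEq a
    simp only [r, hva] at this
    linarith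
  have hr'ne : r' ≠ p := by
    intro hEq
    have := congrFun hEq a
    simp only [r', hva] at this
    linarith
  -- apply stability against 2 mutations
  set R : Fin 2 → Fin k → ℝ := ![r, r'] with hRdef
  have hRS : ∀ i, R i ∈ Δ' k := by
    intro i; fin_cases i <;> simpa [R] using (by first | exact hrS | exact hr'S)
  have hRne : ∀ i, R i ≠ p := by
    intro i; fin_cases i <;> simpa [R] using (by first | exact hrne | exact hr'ne)
  obtain ⟨e, ⟨he0, he1⟩, hE⟩ := h 2 le_rfl R hRS hRne
  have hmix : mix p R (fun _ => e) = p := by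
    funext j
    simp only [mix, Fin.sum_univ_two]
    show e * R 0 j + e * R 1 j + (1 - (e + e)) * p j = p j
    have h0 : R 0 j = p j + v j := rfl
    have h1 : R 1 j = p j - v j := rfl
    rw [h0, h1]; ring
  have hkey := hE (fun _ => e) (fun i => ⟨he0, le_rfl⟩)
  have h0 := hkey 0
  have h1 := hkey 1
  rw [hmix] at h0 h1
  have hR0 : R 0 = r := rfl
  have hR1 : R 1 = r' := rfl
  rw [hR0] at h0; rw [hR1] at h1
  -- linearity contradiction
  have hsum : payoff U r p + payoff U r' p = payoff U p p + payoff U p p := by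
    simp only [payoff, ← Finset.sum_add_distrib]
    refine Finset.sum_congr rfl fun i _ => ?_
    refine Finset.sum_congr rfl fun j _ => ?_
    have hri : r i + r' i = p i + p i := by simp only [r, r']; ring
    show r i * p j * U i j + r' i * p j * U i j = p i * p j * U i j + p i * p j * U i j
    linear_combination (p j * U i j) * hri
  linarith
end
end

section
/- In a 2×2 symmetric game, a pure strategy p is evolutionarily stable against multiple mutations if and only if p is an ESS. -/
open Finset Set

noncomputable section

lemma payoff_comb {k : ℕ} (U : Fin k → Fin k → ℝ) (a b : ℝ) (q s w : Fin k → ℝ) :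
    payoff U (fun l => a * q l + b * s l) w = a * payoff U q w + b * payoff U s w := by
  simp only [payoff]
  rw [Finset.mul_sum, Finset.mul_sum, ← Finset.sum_add_distrib]
  refine Finset.sum_congr rfl fun i _ => ?_
  rw [Finset.mul_sum, Finset.mul_sum, ← Finset.sum_add_distrib]
  exact Finset.sum_congr rfl fun j _ => by ring

lemma fin2_cases {i j : Fin 2} (h : i ≠ j) (l : Fin 2) : l = i ∨ l = j := by
  fin_cases i <;> fin_cases j <;> fin_cases l <;> simp_all

lemma sum_two {i j : Fin 2} (h : i ≠ j) (r : Fin 2 → ℝ) :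
    ∑ l, r l = r i + r j := by
  fin_cases i <;> fin_cases j <;> simp_all [Fin.sum_univ_two] <;> ring

lemma pure_mem (j : Fin 2) : pure' j ∈ Δ' 2 := by
  constructor
  · intro l; simp only [pure']; split <;> norm_num
  · fin_cases j <;> simp [pure', Fin.sum_univ_two]

lemma pure_ne {i j : Fin 2} (h : i ≠ j) : pure' j ≠ pure' i := by
  intro hc
  have := congrFun hc j
  simp [pure', h.symm] at this

theorem stmt_13' (U : Fin 2 → Fin 2 → ℝ) (p : Fin 2 → ℝ) (hp : p ∈ Δ' 2)
    (hpure : ∃ i : Fin 2, p = pure' i) :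
    (∀ m : ℕ, 2 ≤ m → StableAgainst U m p) ↔ IsESS U p := by
  constructor
  · intro h
    refine ⟨hp, fun r hr hrp => ?_⟩
    obtain ⟨e, he, hstab⟩ := h 2 le_rfl (fun _ => r) (fun _ => hr) (fun _ => hrp)
    refine ⟨e, he, fun ε hε0 hεe => ?_⟩
    have := hstab (fun _ => ε / 2) (fun _ => ⟨by linarith, by linarith⟩) 0
    have hmix : mix p (fun _ : Fin 2 => r) (fun _ => ε / 2) =
        fun l => ε * r l + (1 - ε) * p l := by
      funext l; simp [mix, Fin.sum_univ_two]; ring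
    rwa [hmix] at this
  · rintro ⟨hpΔ, hE⟩ m hm
    obtain ⟨i, rfl⟩ := hpure
    -- the opposite pure strategy
    obtain ⟨j, hij⟩ : ∃ j : Fin 2, i ≠ j := by
      fin_cases i
      · exact ⟨1, by decide⟩
      · exact ⟨0, by decide⟩
    obtain ⟨e, ⟨he0, he1⟩, hbar⟩ := hE (pure' j) (pure_mem j) (pure_ne hij)
    intro r hr hrp
    have hm0 : (0:ℝ) < m := by positivity
    have hem : e / m ∈ Set.Ioo (0:ℝ) 1 := by
      constructor
      · exact div_pos he0 hm0
      · rw [div_lt_one hm0]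
        have : (1:ℝ) ≤ m := by exact_mod_cast (by omega : 1 ≤ m)
        linarith
    refine ⟨e / m, hem, ?_⟩
    intro ε hε i0
    -- facts about each mutant
    have hsum : ∀ a, r a i + r a j = 1 := fun a => (sum_two hij (r a)) ▸ (hr a).2
    have hrj_pos : ∀ a, 0 < r a j := by
      intro a
      rcases lt_or_eq_of_le ((hr a).1 j) with h | h
      · exact h
      · exfalso; apply hrp a
        have hri : r a i = 1 := by have := hsum a; linarith
        funext l
        rcases fin2_cases hij l with rfl | rfl
        · simp [pure', hri]
        · simp [pure', Ne.symm hij, ← h]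
    have hrj_le : ∀ a, r a j ≤ 1 := fun a => by have := hsum a; have := (hr a).1 i; linarith
    set τ : ℝ := ∑ a, ε a * r a j with hτ
    have hτ0 : 0 < τ := by
      apply Finset.sum_pos (fun a _ => mul_pos (hε a).1 (hrj_pos a))
      exact ⟨⟨0, by omega⟩, Finset.mem_univ _⟩
    have hτe : τ ≤ e := by
      calc τ ≤ ∑ _a : Fin m, e / m := by
              refine Finset.sum_le_sum fun a _ => ?_
              calc ε a * r a j ≤ ε a * 1 := by
                    exact mul_le_mul_of_nonneg_left (hrj_le a) (le_of_lt (hε a).1)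
                _ = ε a := mul_one _
                _ ≤ e / m := (hε a).2
           _ = e := by rw [Finset.sum_const, Finset.card_univ, Fintype.card_fin, nsmul_eq_mul]; field_simp [hm0.ne']
    -- mix equals the single-mutation mix with mutant pure' j, proportion τ
    have hsum' : ∑ a, ε a * r a i = (∑ a, ε a) - τ := by
      rw [hτ, ← Finset.sum_sub_distrib]
      refine Finset.sum_congr rfl fun a _ => ?_
      linear_combination ε a * (hsum a)
    have hmix : mix (pure' i) r ε = fun l => τ * pure' j l + (1 - τ) * pure' i l := by
      funext l
      obtain hl | hl := fin2_cases hij l <;> subst hl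
      · simp [mix, hsum', pure', hij, Ne.symm hij]
      · simp [mix, pure', hij, Ne.symm hij, ← hτ]
    have hkey := hbar τ hτ0 hτe
    rw [← hmix] at hkey
    -- decompose the mutant
    have hdec : r i0 = fun l => (r i0 j) * pure' j l + (1 - r i0 j) * pure' i l := by
      funext l
      obtain hl | hl := fin2_cases hij l <;> subst hl
      · have := hsum i0; simp [pure', hij, Ne.symm hij]; linarith
      · simp [pure', hij, Ne.symm hij]
    calc payoff U (r i0) (mix (pure' i) r ε)
        = (r i0 j) * payoff U (pure' j) (mix (pure' i) r ε)
          + (1 - r i0 j) * payoff U (pure' i) (mix (pure' i) r ε) := by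
          rw [hdec, payoff_comb]; simp [pure', hij, Ne.symm hij]
      _ < payoff U (pure' i) (mix (pure' i) r ε) := by nlinarith [hrj_pos i0, hrj_le i0]

theorem stmt_13 (U : Fin 2 → Fin 2 → ℝ) (p : Fin 2 → ℝ) (hp : p ∈ Δ' 2)
    (hpure : ∃ i : Fin 2, p = pure' i) :
    (∀ m : ℕ, 2 ≤ m → StableAgainst U m p) ↔ IsESS U p := by
  exact stmt_13' U p hp hpure
end
end

section
/- If p is an ESS and for every q ∈ BR(p)\{p} and every r ∈ Δ one has u(p,r) ≥ u(q,r), then for each fixed pair of mutations r¹, r² ≠ p with r¹ ∈ BR(p), the function h₁(ε₁,ε₂) = u(p,w) - u(r¹,w), where w = ε₁r¹+ε₂r²+(1-ε₁-ε₂)p, is strictly positive for all ε₁,ε₂ > 0 with ε₁+ε₂ ≤ 1. -/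
open Finset Set

noncomputable section

theorem stmt_14 {k : ℕ} (U : Fin k → Fin k → ℝ) (p : Fin k → ℝ)
    (hNE : p ∈ BR U p)
    (hESS : ∀ q ∈ BR U p, q ≠ p → payoff U p q > payoff U q q)
    (hdom : ∀ q ∈ BR U p, q ≠ p → ∀ r ∈ Δ' k, payoff U p r ≥ payoff U q r)
    (r1 r2 : Fin k → ℝ) (hr1 : r1 ∈ Δ' k) (hr2 : r2 ∈ Δ' k)
    (hr1p : r1 ≠ p) (hr2p : r2 ≠ p) (hr1BR : r1 ∈ BR U p) :
    ∀ ε1 ε2 : ℝ, 0 < ε1 → 0 < ε2 → ε1 + ε2 ≤ 1 →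
      payoff U p (fun j => ε1 * r1 j + ε2 * r2 j + (1 - ε1 - ε2) * p j) -
        payoff U r1 (fun j => ε1 * r1 j + ε2 * r2 j + (1 - ε1 - ε2) * p j) > 0 := by
  intro ε1 ε2 h1 h2 h12
  have lin : ∀ x : Fin k → ℝ,
      payoff U x (fun j => ε1 * r1 j + ε2 * r2 j + (1 - ε1 - ε2) * p j) =
        ε1 * payoff U x r1 + ε2 * payoff U x r2 + (1 - ε1 - ε2) * payoff U x p := by
    intro x
    simp only [payoff, Finset.mul_sum, ← Finset.sum_add_distrib]
    exact Finset.sum_congr rfl fun i _ => Finset.sum_congr rfl fun j _ => by ring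
  have hpΔ : p ∈ Δ' k := hNE.1
  have heq : payoff U r1 p = payoff U p p :=
    le_antisymm (hNE.2 r1 hr1) (hr1BR.2 p hpΔ)
  have h3 : payoff U p r1 > payoff U r1 r1 := hESS r1 hr1BR hr1p
  have h4 : payoff U p r2 ≥ payoff U r1 r2 := hdom r1 hr1BR hr1p r2 hr2
  rw [lin, lin, heq]
  nlinarith
end
end
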